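/- arXiv:2507.05075 — 5 statements merged into one kernel-verified Lean document; each statement's English description precedes it below -/
import Mathlib

section
/- Let γ : [1,∞) → (0,∞) be a measurable slowly varying function (for every a > 0, γ(a u)/γ(u) → 1 as u → ∞), let p ∈ (−1,0), and set ε_j = γ(j) j^p for integers j ≥ 1. Then the partial sums Σ_{k=1}^{j−1} ε_k tend to +∞, so the scale sequence S_j = exp(Σ_{k=1}^{j−1} ε_k) tends to +∞, yet the growth is subexponential: (log S_j)/j → 0 as j → ∞; moreover (p+1)·(log S_j)/(γ(j) j^{p+1}) → 1, i.e., S_j ≍ exp(γ(j) j^{p+1}/(p+1)) at logarithmic order. -/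
open Filter Real MeasureTheory
open scoped ENNReal


lemma uct_step (h : ℝ → ℝ) (hmeas : Measurable h)
    (hlim : ∀ t : ℝ, Tendsto (fun x => h (x + t) - h x) atTop (nhds 0))
    {δ : ℝ} (hδ : 0 < δ) :
    ∀ᶠ x : ℝ in atTop, ∀ t ∈ Set.Icc (0:ℝ) 1, |h (x + t) - h x| ≤ δ := by
  by_contra hcon
  rw [Filter.not_eventually] at hcon
  have hfreq := Filter.frequently_atTop.mp hcon
  choose x hx hbad using fun n : ℕ => hfreq n
  push_neg at hbad
  choose t ht hgt using hbad
  have hxtop : Tendsto x atTop atTop :=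
    tendsto_atTop_mono hx tendsto_natCast_atTop_atTop
  have hytop : Tendsto (fun n => x n + t n) atTop atTop := by
    refine tendsto_atTop_mono (fun n => ?_) hxtop
    have := (ht n).1; linarith
  set f : ℕ → ℝ → ℝ := fun n s => h (x n + s) - h (x n) with hf
  set g : ℕ → ℝ → ℝ := fun n s => h (x n + t n + s) - h (x n + t n) with hg
  have hfm : ∀ n, StronglyMeasurable (f n) := fun n =>
    ((hmeas.comp (measurable_const.add measurable_id)).sub measurable_const).stronglyMeasurable
  have hgm : ∀ n, StronglyMeasurable (g n) := fun n =>
    ((hmeas.comp (measurable_const.add measurable_id)).sub measurable_const).stronglyMeasurable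
  have hfl : ∀ s : ℝ, Tendsto (fun n => f n s) atTop (nhds 0) := fun s =>
    (hlim s).comp hxtop
  have hgl : ∀ s : ℝ, Tendsto (fun n => g n s) atTop (nhds 0) := fun s =>
    (hlim s).comp hytop
  have hIcc2 : volume (Set.Icc (0:ℝ) 2) ≠ ⊤ := by
    rw [Real.volume_Icc]; simp
  have hquarter : (0:ℝ) < 1/4 := by norm_num
  obtain ⟨Ef, hEfs, hEfm, hEfμ, hEfu⟩ := tendstoUniformlyOn_of_ae_tendsto hfm
    stronglyMeasurable_const (measurableSet_Icc : MeasurableSet (Set.Icc (0:ℝ) 2)) hIcc2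
    (Filter.Eventually.of_forall fun s _ => hfl s) hquarter
  obtain ⟨Eg, hEgs, hEgm, hEgμ, hEgu⟩ := tendstoUniformlyOn_of_ae_tendsto hgm
    stronglyMeasurable_const (measurableSet_Icc : MeasurableSet (Set.Icc (0:ℝ) 2)) hIcc2
    (Filter.Eventually.of_forall fun s _ => hgl s) hquarter
  set A : Set ℝ := Set.Icc (0:ℝ) 2 \ Ef with hA
  set B : Set ℝ := Set.Icc (0:ℝ) 1 \ Eg with hB
  have hAm : MeasurableSet A := measurableSet_Icc.diff hEfm
  have hBm : MeasurableSet B := measurableSet_Icc.diff hEgm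
  -- measure of A
  have hAμ : ENNReal.ofReal (7/4) ≤ volume A := by
    have hsub : Set.Icc (0:ℝ) 2 ⊆ A ∪ Ef := fun y hy => by
      by_cases hy' : y ∈ Ef
      · exact Or.inr hy'
      · exact Or.inl ⟨hy, hy'⟩
    have h1 : ENNReal.ofReal 2 ≤ volume A + ENNReal.ofReal (1/4) := by
      have := (measure_mono hsub).trans (measure_union_le (μ := volume) A Ef)
      rw [Real.volume_Icc] at this
      norm_num at this ⊢
      exact this.trans (add_le_add_right hEfμ _)
    have h2 : ENNReal.ofReal (7/4) + ENNReal.ofReal (1/4)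
        ≤ volume A + ENNReal.ofReal (1/4) := by
      rw [← ENNReal.ofReal_add (by norm_num) (by norm_num)]
      norm_num
      norm_num at h1
      exact h1
    exact ENNReal.le_of_add_le_add_right ENNReal.ofReal_ne_top h2
  -- measure of B
  have hBμ : ENNReal.ofReal (3/4) ≤ volume B := by
    have hsub : Set.Icc (0:ℝ) 1 ⊆ B ∪ Eg := fun y hy => by
      by_cases hy' : y ∈ Eg
      · exact Or.inr hy'
      · exact Or.inl ⟨hy, hy'⟩
    have h1 : ENNReal.ofReal 1 ≤ volume B + ENNReal.ofReal (1/4) := by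
      have := (measure_mono hsub).trans (measure_union_le (μ := volume) B Eg)
      rw [Real.volume_Icc] at this
      norm_num at this ⊢
      exact this.trans (add_le_add_right hEgμ _)
    have h2 : ENNReal.ofReal (3/4) + ENNReal.ofReal (1/4)
        ≤ volume B + ENNReal.ofReal (1/4) := by
      rw [← ENNReal.ofReal_add (by norm_num) (by norm_num)]
      norm_num
      norm_num at h1
      exact h1
    exact ENNReal.le_of_add_le_add_right ENNReal.ofReal_ne_top h2
  -- uniform thresholds
  rw [Metric.tendstoUniformlyOn_iff] at hEfu hEgu
  obtain ⟨N1, hN1⟩ := Filter.eventually_atTop.mp (hEfu (δ/2) (by linarith))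
  obtain ⟨N2, hN2⟩ := Filter.eventually_atTop.mp (hEgu (δ/2) (by linarith))
  set n := max N1 N2 with hn
  -- the translated set C
  set C : Set ℝ := ((fun s => s + t n) ⁻¹' A) ∩ Set.Icc (0:ℝ) 1 with hC
  have hCm : MeasurableSet C := ((measurable_add_const (t n)) hAm).inter measurableSet_Icc
  have hCμ : ENNReal.ofReal (3/4) ≤ volume C := by
    have hpre : volume ((fun s => s + t n) ⁻¹' A) = volume A :=
      measure_preimage_add_right volume (t n) A
    have hsub : ((fun s => s + t n) ⁻¹' A) ⊆
        C ∪ (Set.Icc (-(t n)) 0 ∪ Set.Icc 1 (2 - t n)) := by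
      intro s hs
      have hs2 : s + t n ∈ Set.Icc (0:ℝ) 2 := hs.1
      have ht0 := (ht n).1
      have ht1 := (ht n).2
      rcases le_or_gt 0 s with h0 | h0
      · rcases le_or_gt s 1 with h1 | h1
        · exact Or.inl ⟨hs, h0, h1⟩
        · exact Or.inr (Or.inr ⟨h1.le, by have := hs2.2; linarith⟩)
      · exact Or.inr (Or.inl ⟨by have := hs2.1; linarith, h0.le⟩)
    have h1 : volume A ≤ volume C + ENNReal.ofReal 1 := by
      rw [← hpre]
      refine (measure_mono hsub).trans ?_
      refine (measure_union_le _ _).trans ?_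
      refine add_le_add_right ?_ _
      refine (measure_union_le _ _).trans ?_
      rw [Real.volume_Icc, Real.volume_Icc]
      rw [← ENNReal.ofReal_add (by have := (ht n).1; linarith) (by have := (ht n).2; linarith)]
      apply ENNReal.ofReal_le_ofReal
      ring_nf
      linarith
    have h2 : ENNReal.ofReal (3/4) + ENNReal.ofReal 1
        ≤ volume C + ENNReal.ofReal 1 := by
      rw [← ENNReal.ofReal_add (by norm_num) (by norm_num)]
      refine le_trans ?_ (hAμ.trans h1)
      apply ENNReal.ofReal_le_ofReal; norm_num
    exact ENNReal.le_of_add_le_add_right ENNReal.ofReal_ne_top h2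
  -- B ∩ C is nonempty
  have hBC : (B ∩ C).Nonempty := by
    apply MeasureTheory.nonempty_of_measure_ne_zero (μ := volume)
    have hUnion : volume (B ∪ C) ≤ ENNReal.ofReal 1 := by
      have : B ∪ C ⊆ Set.Icc (0:ℝ) 1 := by
        rintro y (hy | hy)
        · exact hy.1
        · exact hy.2
      refine (measure_mono this).trans ?_
      rw [Real.volume_Icc]; norm_num
    have heq : volume (B ∪ C) + volume (B ∩ C) = volume B + volume C :=
      measure_union_add_inter B hCm
    have h1 : ENNReal.ofReal (3/4) + ENNReal.ofReal (3/4)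
        ≤ ENNReal.ofReal 1 + volume (B ∩ C) := by
      calc ENNReal.ofReal (3/4) + ENNReal.ofReal (3/4) ≤ volume B + volume C :=
            add_le_add hBμ hCμ
        _ = volume (B ∪ C) + volume (B ∩ C) := heq.symm
        _ ≤ ENNReal.ofReal 1 + volume (B ∩ C) := add_le_add_left hUnion _
    have h2 : ENNReal.ofReal (1/2) + ENNReal.ofReal 1
        ≤ volume (B ∩ C) + ENNReal.ofReal 1 := by
      rw [← ENNReal.ofReal_add (by norm_num) (by norm_num)]
      rw [← ENNReal.ofReal_add (by norm_num) (by norm_num)] at h1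
      rw [add_comm (volume (B ∩ C))]
      refine le_trans ?_ h1
      apply ENNReal.ofReal_le_ofReal; norm_num
    have h3 : ENNReal.ofReal (1/2) ≤ volume (B ∩ C) :=
      ENNReal.le_of_add_le_add_right ENNReal.ofReal_ne_top h2
    intro h0
    rw [h0] at h3
    simp [ENNReal.ofReal_pos] at h3
  obtain ⟨s, hsB, hsC⟩ := hBC
  -- derive the contradiction
  have hsA : s + t n ∈ A := hsC.1
  have hsg : s ∈ Set.Icc (0:ℝ) 2 \ Eg :=
    ⟨Set.Icc_subset_Icc_right (by norm_num) hsB.1, hsB.2⟩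
  have e1 : dist ((fun _ => (0:ℝ)) (s + t n)) (f n (s + t n)) < δ/2 :=
    hN1 n (le_max_left _ _) (s + t n) hsA
  have e2 : dist ((fun _ => (0:ℝ)) s) (g n s) < δ/2 :=
    hN2 n (le_max_right _ _) s hsg
  rw [Real.dist_eq] at e1 e2
  have key : f n (t n) = f n (s + t n) - g n s := by
    simp only [hf, hg]; ring
  have habs : |f n (t n)| ≤ |f n (s + t n)| + |g n s| := by
    rw [key]; exact abs_sub _ _
  have h1 : |f n (s + t n)| < δ/2 := by
    have : |0 - f n (s + t n)| = |f n (s + t n)| := by rw [zero_sub, abs_neg]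
    rwa [this] at e1
  have h2 : |g n s| < δ/2 := by
    have : |0 - g n s| = |g n s| := by rw [zero_sub, abs_neg]
    rwa [this] at e2
  have := hgt n
  have : δ < |f n (t n)| := this
  linarith

lemma chain_bound (h : ℝ → ℝ) {δ X : ℝ} (hδ : 0 ≤ δ)
    (H : ∀ x, X ≤ x → ∀ t ∈ Set.Icc (0:ℝ) 1, |h (x + t) - h x| ≤ δ) :
    ∀ u v : ℝ, X ≤ u → u ≤ v → |h v - h u| ≤ δ * (v - u + 1) := by
  have main : ∀ n : ℕ, ∀ u v : ℝ, X ≤ u → u ≤ v → v - u ≤ n → |h v - h u| ≤ δ * n := by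
    intro n
    induction n with
    | zero =>
      intro u v hXu huv hvu
      have : v = u := by push_cast at hvu; linarith
      simp [this]
    | succ n ih =>
      intro u v hXu huv hvu
      by_cases hcase : v - u ≤ 1
      · have := H u hXu (v - u) ⟨by linarith, hcase⟩
        rw [add_sub_cancel] at this
        have hn1 : (1:ℝ) ≤ (n:ℝ) + 1 := by have : (0:ℝ) ≤ (n:ℝ) := Nat.cast_nonneg n; linarith
        calc |h v - h u| ≤ δ := this
          _ ≤ δ * ((n:ℝ)+1) := by nlinarith
          _ = δ * ((n+1:ℕ):ℝ) := by push_cast; ring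
      · push_neg at hcase
        have hw : X ≤ v - 1 := by linarith
        have h1 : |h (v-1) - h u| ≤ δ * n := by
          refine ih u (v-1) hXu (by linarith) ?_
          push_cast at hvu ⊢; linarith
        have h2 : |h v - h (v-1)| ≤ δ := by
          have := H (v-1) hw 1 ⟨by norm_num, le_refl 1⟩
          rwa [sub_add_cancel] at this
        calc |h v - h u| = |(h v - h (v-1)) + (h (v-1) - h u)| := by ring_nf
          _ ≤ |h v - h (v-1)| + |h (v-1) - h u| := abs_add_le _ _
          _ ≤ δ + δ * n := by linarith
          _ = δ * ((n+1:ℕ):ℝ) := by push_cast; ring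
  intro u v hXu huv
  have hceil : v - u ≤ (⌈v - u⌉₊ : ℝ) := Nat.le_ceil _
  have hceil2 : (⌈v - u⌉₊ : ℝ) ≤ v - u + 1 := by
    have := Nat.ceil_lt_add_one (by linarith : (0:ℝ) ≤ v - u)
    linarith
  calc |h v - h u| ≤ δ * (⌈v - u⌉₊ : ℝ) := main _ u v hXu huv hceil
    _ ≤ δ * (v - u + 1) := by nlinarith

lemma hshift (γ : ℝ → ℝ) (hγpos : ∀ u : ℝ, 1 ≤ u → 0 < γ u)
    (hsv : ∀ a : ℝ, 0 < a → Tendsto (fun u : ℝ => γ (a * u) / γ u) atTop (nhds 1))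
    (t : ℝ) :
    Tendsto (fun x => Real.log (γ (Real.exp (x + t))) - Real.log (γ (Real.exp x)))
      atTop (nhds 0) := by
  have ha : (0:ℝ) < Real.exp t := Real.exp_pos t
  have h1 : Tendsto (fun x : ℝ => γ (Real.exp t * Real.exp x) / γ (Real.exp x))
      atTop (nhds 1) := (hsv _ ha).comp Real.tendsto_exp_atTop
  have h2 : Tendsto (fun x : ℝ =>
      Real.log (γ (Real.exp t * Real.exp x) / γ (Real.exp x))) atTop (nhds 0) := by
    have := ((Real.continuousAt_log one_ne_zero).tendsto).comp h1
    simpa [Function.comp_def] using this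
  refine h2.congr' ?_
  filter_upwards [Filter.eventually_ge_atTop (max 0 (-t))] with x hx
  have hx0 : (0:ℝ) ≤ x := le_trans (le_max_left _ _) hx
  have hxt : (0:ℝ) ≤ x + t := by have := le_trans (le_max_right _ _) hx; linarith
  have hp1 : 0 < γ (Real.exp x) := hγpos _ (Real.one_le_exp hx0)
  have hp2 : 0 < γ (Real.exp t * Real.exp x) := by
    rw [← Real.exp_add]
    exact hγpos _ (Real.one_le_exp (by linarith))
  rw [Real.log_div hp2.ne' hp1.ne', ← Real.exp_add]
  ring_nf

lemma potter (γ : ℝ → ℝ) (hmeas : Measurable γ) (hγpos : ∀ u : ℝ, 1 ≤ u → 0 < γ u)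
    (hsv : ∀ a : ℝ, 0 < a → Tendsto (fun u : ℝ => γ (a * u) / γ u) atTop (nhds 1))
    {δ : ℝ} (hδ : 0 < δ) :
    ∃ N : ℕ, 1 ≤ N ∧ ∀ j k : ℕ, N ≤ j → j ≤ k →
      |Real.log (γ k) - Real.log (γ j)| ≤ δ * (Real.log k - Real.log j + 1) := by
  set h : ℝ → ℝ := fun x => Real.log (γ (Real.exp x)) with hh
  have hhm : Measurable h := Real.measurable_log.comp (hmeas.comp Real.measurable_exp)
  have hlim : ∀ t : ℝ, Tendsto (fun x => h (x + t) - h x) atTop (nhds 0) :=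
    fun t => hshift γ hγpos hsv t
  obtain ⟨X, hX⟩ := Filter.eventually_atTop.mp (uct_step h hhm hlim hδ)
  refine ⟨max 1 ⌈Real.exp X⌉₊, le_max_left _ _, ?_⟩
  intro j k hNj hjk
  have hj1 : 1 ≤ j := le_trans (le_max_left _ _) hNj
  have hjR : (1:ℝ) ≤ (j:ℝ) := by exact_mod_cast hj1
  have hkR : (j:ℝ) ≤ (k:ℝ) := by exact_mod_cast hjk
  have hjpos : (0:ℝ) < j := by linarith
  have hkpos : (0:ℝ) < k := by linarith
  have hXlog : X ≤ Real.log j := by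
    have h1 : Real.exp X ≤ (⌈Real.exp X⌉₊ : ℝ) := Nat.le_ceil _
    have h2 : (⌈Real.exp X⌉₊ : ℝ) ≤ (j:ℝ) := by
      exact_mod_cast le_trans (le_max_right 1 _) hNj
    rw [← Real.exp_le_exp, Real.exp_log hjpos]; linarith
  have := chain_bound h hδ.le (fun x hx t htt => hX x hx t htt)
    (Real.log j) (Real.log k) hXlog (Real.log_le_log hjpos hkR)
  simpa [hh, Real.exp_log hjpos, Real.exp_log hkpos] using this

-- a.s. sub-polynomial bound on log γ at integers
lemma logsub (γ : ℝ → ℝ) (hmeas : Measurable γ) (hγpos : ∀ u : ℝ, 1 ≤ u → 0 < γ u)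
    (hsv : ∀ a : ℝ, 0 < a → Tendsto (fun u : ℝ => γ (a * u) / γ u) atTop (nhds 1))
    {c : ℝ} (hc : 0 < c) :
    ∀ᶠ j : ℕ in atTop, |Real.log (γ j)| ≤ c * Real.log j := by
  obtain ⟨N, hN1, hN⟩ := potter γ hmeas hγpos hsv (δ := c/2) (by linarith)
  have hNR : (1:ℝ) ≤ (N:ℝ) := by exact_mod_cast hN1
  have hlogtop : Tendsto (fun j : ℕ => Real.log j) atTop atTop :=
    Real.tendsto_log_atTop.comp tendsto_natCast_atTop_atTop
  filter_upwards [Filter.eventually_ge_atTop N,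
    (hlogtop.eventually_ge_atTop ((2/c) * (|Real.log (γ N)| + c/2 * (1 - Real.log N) + c/2)))]
    with j hjN hjlog
  have hkey := hN N j (le_refl N) hjN
  have habs : |Real.log (γ j)| ≤ |Real.log (γ N)| + c/2 * (Real.log j - Real.log N + 1) := by
    have := abs_sub_abs_le_abs_sub (Real.log (γ j)) (Real.log (γ N))
    have h2 : |Real.log (γ j) - Real.log (γ N)| ≤ c/2 * (Real.log j - Real.log N + 1) := hkey
    linarith
  have hlog : (2/c) * (|Real.log (γ N)| + c/2 * (1 - Real.log N) + c/2) ≤ Real.log j := hjlog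
  have hcpos : (0:ℝ) < 2/c := by positivity
  -- from hlog : |log γ N| + c/2*(1 - log N) + c/2 ≤ (c/2) * log j
  have : |Real.log (γ N)| + c/2 * (1 - Real.log N) + c/2 ≤ c/2 * Real.log j := by
    have := mul_le_mul_of_nonneg_left hlog (le_of_lt (by positivity : (0:ℝ) < c/2))
    calc |Real.log (γ N)| + c/2 * (1 - Real.log N) + c/2
        = c/2 * ((2/c) * (|Real.log (γ N)| + c/2 * (1 - Real.log N) + c/2)) := by
          field_simp
      _ ≤ c/2 * Real.log j := this
  calc |Real.log (γ j)| ≤ |Real.log (γ N)| + c/2 * (Real.log j - Real.log N + 1) := habs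
    _ = (|Real.log (γ N)| + c/2 * (1 - Real.log N)) + c/2 * Real.log j := by ring
    _ ≤ c/2 * Real.log j + c/2 * Real.log j := by linarith
    _ = c * Real.log j := by ring

lemma rpow_slope {q : ℝ} (hq₁ : -1 < q) (hq₂ : q < 0) {a : ℝ} (ha : 0 ≤ a) :
    ∃ c ∈ Set.Ioo a (a+1), (a+1) ^ (q+1) - a ^ (q+1) = (q+1) * c ^ q := by
  have hab : a < a + 1 := by linarith
  have hcont : ContinuousOn (fun x : ℝ => x ^ (q+1)) (Set.Icc a (a+1)) := fun x _ =>
    (Real.continuousAt_rpow_const x (q+1) (Or.inr (by linarith))).continuousWithinAt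
  have hderiv : ∀ x ∈ Set.Ioo a (a+1),
      HasDerivAt (fun x : ℝ => x ^ (q+1)) ((q+1) * x ^ q) x := by
    intro x hx
    have hx0 : x ≠ 0 := by have := hx.1; intro h; rw [h] at this; linarith
    have := Real.hasDerivAt_rpow_const (p := q+1) (Or.inl hx0) (x := x)
    convert this using 2
    ring
  obtain ⟨c, hc, hceq⟩ := exists_hasDerivAt_eq_slope (fun x : ℝ => x ^ (q+1))
    (fun x => (q+1) * x ^ q) hab hcont hderiv
  refine ⟨c, hc, ?_⟩
  rw [hceq]
  field_simp
  ring

lemma term_ub {q : ℝ} (hq₁ : -1 < q) (hq₂ : q < 0) (k : ℕ) (hk : 1 ≤ k) :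
    (q+1) * (k:ℝ) ^ q ≤ (k:ℝ) ^ (q+1) - ((k:ℝ) - 1) ^ (q+1) := by
  have ha : (0:ℝ) ≤ (k:ℝ) - 1 := by
    have : (1:ℝ) ≤ (k:ℝ) := by exact_mod_cast hk
    linarith
  obtain ⟨c, hc, hceq⟩ := rpow_slope hq₁ hq₂ ha
  have heq : (k:ℝ) - 1 + 1 = (k:ℝ) := by ring
  rw [heq] at hceq hc
  rw [hceq]
  have hc0 : 0 < c := lt_of_le_of_lt ha hc.1
  have : (k:ℝ) ^ q ≤ c ^ q := Real.rpow_le_rpow_of_nonpos hc0 hc.2.le hq₂.le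
  nlinarith [hq₁]

lemma term_lb {q : ℝ} (hq₁ : -1 < q) (hq₂ : q < 0) (k : ℕ) (hk : 1 ≤ k) :
    ((k:ℝ)+1) ^ (q+1) - (k:ℝ) ^ (q+1) ≤ (q+1) * (k:ℝ) ^ q := by
  have hk0 : (0:ℝ) < (k:ℝ) := by exact_mod_cast hk
  obtain ⟨c, hc, hceq⟩ := rpow_slope hq₁ hq₂ hk0.le
  rw [hceq]
  have : c ^ q ≤ (k:ℝ) ^ q := Real.rpow_le_rpow_of_nonpos hk0 hc.1.le hq₂.le
  nlinarith [hq₁]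

lemma tele_ub (g f : ℕ → ℝ) (m : ℕ)
    (hle : ∀ k, m ≤ k → f k ≤ g (k+1) - g k) :
    ∀ j, m ≤ j → ∑ k ∈ Finset.Ico m j, f k ≤ g j - g m := by
  intro j hj
  induction j, hj using Nat.le_induction with
  | base => simp
  | succ j hj ih =>
    rw [Finset.sum_Ico_succ_top hj]
    have := hle j hj
    linarith

lemma tele_lb (g f : ℕ → ℝ) (m : ℕ)
    (hle : ∀ k, m ≤ k → g (k+1) - g k ≤ f k) :
    ∀ j, m ≤ j → g j - g m ≤ ∑ k ∈ Finset.Ico m j, f k := by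
  intro j hj
  induction j, hj using Nat.le_induction with
  | base => simp
  | succ j hj ih =>
    rw [Finset.sum_Ico_succ_top hj]
    have := hle j hj
    linarith

lemma sum_rpow_ub {q : ℝ} (hq₁ : -1 < q) (hq₂ : q < 0) (m j : ℕ) (hm : 1 ≤ m)
    (hmj : m ≤ j) :
    ∑ k ∈ Finset.Ico m j, (k:ℝ) ^ q ≤ (j:ℝ) ^ (q+1) / (q+1) := by
  have hq1 : (0:ℝ) < q + 1 := by linarith
  set g : ℕ → ℝ := fun i => (((i:ℝ) - 1) ⊔ 0) ^ (q+1) / (q+1) with hg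
  have hle : ∀ k, m ≤ k → (k:ℝ) ^ q ≤ g (k+1) - g k := by
    intro k hk
    have hk1 : 1 ≤ k := le_trans hm hk
    have hkR : (1:ℝ) ≤ (k:ℝ) := by exact_mod_cast hk1
    have e1 : g (k+1) = (k:ℝ) ^ (q+1) / (q+1) := by
      simp only [hg]
      congr 2
      push_cast
      rw [max_eq_left (by linarith)]
      ring
    have e2 : g k = ((k:ℝ) - 1) ^ (q+1) / (q+1) := by
      simp only [hg]
      congr 2
      rw [max_eq_left (by linarith)]
    rw [e1, e2]
    have := term_ub hq₁ hq₂ k hk1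
    rw [div_sub_div_same, le_div_iff₀ hq1]
    linarith
  have h1 := tele_ub g (fun k => (k:ℝ) ^ q) m hle j hmj
  have hg0 : 0 ≤ g m := by
    apply div_nonneg _ hq1.le
    apply Real.rpow_nonneg
    exact le_max_right _ _
  have hgj : g j ≤ (j:ℝ) ^ (q+1) / (q+1) := by
    have hbase : ((j:ℝ) - 1) ⊔ 0 ≤ (j:ℝ) := by
      have : (0:ℝ) ≤ (j:ℝ) := Nat.cast_nonneg j
      apply max_le <;> linarith
    have : (((j:ℝ) - 1) ⊔ 0) ^ (q+1) ≤ (j:ℝ) ^ (q+1) :=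
      Real.rpow_le_rpow (le_max_right _ _) hbase hq1.le
    simp only [hg]
    exact div_le_div_of_nonneg_right this hq1.le
  linarith

lemma sum_rpow_lb {q : ℝ} (hq₁ : -1 < q) (hq₂ : q < 0) (m j : ℕ) (hm : 1 ≤ m)
    (hmj : m ≤ j) :
    ((j:ℝ) ^ (q+1) - (m:ℝ) ^ (q+1)) / (q+1) ≤ ∑ k ∈ Finset.Ico m j, (k:ℝ) ^ q := by
  have hq1 : (0:ℝ) < q + 1 := by linarith
  set g : ℕ → ℝ := fun i => (i:ℝ) ^ (q+1) / (q+1) with hg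
  have hle : ∀ k, m ≤ k → g (k+1) - g k ≤ (k:ℝ) ^ q := by
    intro k hk
    have hk1 : 1 ≤ k := le_trans hm hk
    simp only [hg]
    push_cast
    rw [div_sub_div_same, div_le_iff₀ hq1]
    have := term_lb hq₁ hq₂ k hk1
    linarith
  have h1 := tele_lb g (fun k => (k:ℝ) ^ q) m hle j hmj
  simp only [hg] at h1
  rw [div_sub_div_same] at h1
  exact h1

lemma grow_pos (γ : ℝ → ℝ) (hmeas : Measurable γ) (hγpos : ∀ u : ℝ, 1 ≤ u → 0 < γ u)
    (hsv : ∀ a : ℝ, 0 < a → Tendsto (fun u : ℝ => γ (a * u) / γ u) atTop (nhds 1))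
    {q : ℝ} (hq : 0 < q) :
    Tendsto (fun j : ℕ => γ j * (j:ℝ) ^ q) atTop atTop := by
  have hlogtop : Tendsto (fun j : ℕ => Real.log j) atTop atTop :=
    Real.tendsto_log_atTop.comp tendsto_natCast_atTop_atTop
  have h1 : Tendsto (fun j : ℕ => Real.log (γ j) + q * Real.log j) atTop atTop := by
    refine tendsto_atTop_mono' atTop ?_ (hlogtop.const_mul_atTop (by linarith : (0:ℝ) < q/2))
    filter_upwards [logsub γ hmeas hγpos hsv (by linarith : (0:ℝ) < q/2)] with j hj
    have := abs_le.mp hj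
    linarith [this.1]
  have h2 : Tendsto (fun j : ℕ => Real.exp (Real.log (γ j) + q * Real.log j)) atTop atTop :=
    Real.tendsto_exp_atTop.comp h1
  refine h2.congr' ?_
  filter_upwards [Filter.eventually_ge_atTop 1] with j hj
  have hjR : (1:ℝ) ≤ (j:ℝ) := by exact_mod_cast hj
  have hjpos : (0:ℝ) < j := by linarith
  rw [Real.exp_add, Real.exp_log (hγpos _ hjR), Real.rpow_def_of_pos hjpos, mul_comm q]

lemma grow_neg (γ : ℝ → ℝ) (hmeas : Measurable γ) (hγpos : ∀ u : ℝ, 1 ≤ u → 0 < γ u)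
    (hsv : ∀ a : ℝ, 0 < a → Tendsto (fun u : ℝ => γ (a * u) / γ u) atTop (nhds 1))
    {q : ℝ} (hq : q < 0) :
    Tendsto (fun j : ℕ => γ j * (j:ℝ) ^ q) atTop (nhds 0) := by
  have hlogtop : Tendsto (fun j : ℕ => Real.log j) atTop atTop :=
    Real.tendsto_log_atTop.comp tendsto_natCast_atTop_atTop
  have h1 : Tendsto (fun j : ℕ => Real.log (γ j) + q * Real.log j) atTop atBot := by
    refine tendsto_atBot_mono' atTop (f₁ := fun j : ℕ => q/2 * Real.log j) ?_ ?_
    · filter_upwards [logsub γ hmeas hγpos hsv (by linarith : (0:ℝ) < -q/2)] with j hj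
      have := abs_le.mp hj
      show Real.log (γ j) + q * Real.log j ≤ q/2 * Real.log j
      linarith [this.2]
    · have := hlogtop.const_mul_atTop (by linarith : (0:ℝ) < -q/2)
      have h2 : Tendsto (fun j : ℕ => -(-q/2 * Real.log j)) atTop atBot :=
        tendsto_neg_atBot_iff.mpr this
      refine h2.congr fun j => by ring
  have h2 : Tendsto (fun j : ℕ => Real.exp (Real.log (γ j) + q * Real.log j)) atTop (nhds 0) :=
    Real.tendsto_exp_atBot.comp h1
  refine h2.congr' ?_
  filter_upwards [Filter.eventually_ge_atTop 1] with j hj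
  have hjR : (1:ℝ) ≤ (j:ℝ) := by exact_mod_cast hj
  have hjpos : (0:ℝ) < j := by linarith
  rw [Real.exp_add, Real.exp_log (hγpos _ hjR), Real.rpow_def_of_pos hjpos, mul_comm q]

lemma claimA (γ : ℝ → ℝ) (hγpos : ∀ u : ℝ, 1 ≤ u → 0 < γ u)
    (p : ℝ) (hp₁ : -1 < p) (hp₂ : p < 0)
    (ε : ℕ → ℝ) (hε : ∀ j : ℕ, 1 ≤ j → ε j = γ j * (j : ℝ) ^ p)
    {δ : ℝ} (hδ0 : 0 < δ) (hδ1 : δ < p + 1) (N : ℕ) (hN1 : 1 ≤ N)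
    (hPot : ∀ j k : ℕ, N ≤ j → j ≤ k →
      |Real.log (γ k) - Real.log (γ j)| ≤ δ * (Real.log k - Real.log j + 1)) :
    ∀ j : ℕ, N ≤ j → (∑ k ∈ Finset.Ico 1 j, ε k) ≤ (∑ k ∈ Finset.Ico 1 N, ε k)
      + Real.exp δ * γ j * (j:ℝ) ^ (p+1) / (p+1-δ) := by
  intro j hj
  have hj1 : 1 ≤ j := le_trans hN1 hj
  have hjR : (1:ℝ) ≤ (j:ℝ) := by exact_mod_cast hj1
  have hjpos : (0:ℝ) < j := by linarith
  have hγj : 0 < γ j := hγpos _ hjR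
  rw [← Finset.sum_Ico_consecutive ε hN1 hj]
  refine add_le_add_right ?_ _
  have hterm : ∀ k ∈ Finset.Ico N j,
      ε k ≤ (Real.exp δ * γ j * (j:ℝ) ^ δ) * (k:ℝ) ^ (p - δ) := by
    intro k hk
    obtain ⟨hkN, hkj⟩ := Finset.mem_Ico.mp hk
    have hk1 : 1 ≤ k := le_trans hN1 hkN
    have hkR : (1:ℝ) ≤ (k:ℝ) := by exact_mod_cast hk1
    have hkpos : (0:ℝ) < k := by linarith
    have hγk : 0 < γ k := hγpos _ hkR
    have hpot := hPot k j hkN (le_of_lt hkj)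
    have hlog : Real.log (γ k) ≤ Real.log (γ j)
        + δ * (Real.log j - Real.log k) + δ := by
      have h1 : Real.log (γ k) - Real.log (γ j) ≤ |Real.log (γ j) - Real.log (γ k)| := by
        rw [abs_sub_comm]; exact le_abs_self _
      nlinarith [hpot]
    have hγkb : γ k ≤ γ j * (j:ℝ) ^ δ * ((k:ℝ) ^ δ)⁻¹ * Real.exp δ := by
      have e1 : γ j * (j:ℝ) ^ δ * ((k:ℝ) ^ δ)⁻¹ * Real.exp δ
          = Real.exp (Real.log (γ j) + δ * Real.log j + (-(δ * Real.log k)) + δ) := by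
        rw [Real.exp_add, Real.exp_add, Real.exp_add, Real.exp_log hγj, Real.exp_neg,
          Real.rpow_def_of_pos hjpos, Real.rpow_def_of_pos hkpos, mul_comm δ (Real.log j),
          mul_comm δ (Real.log k)]
      rw [e1, ← Real.exp_log hγk]
      apply Real.exp_le_exp.mpr
      linarith
    have e2 : ((k:ℝ) ^ δ)⁻¹ * (k:ℝ) ^ p = (k:ℝ) ^ (p - δ) := by
      rw [← Real.rpow_neg hkpos.le, ← Real.rpow_add hkpos]
      ring_nf
    rw [hε k hk1]
    calc γ k * (k:ℝ) ^ p ≤ (γ j * (j:ℝ) ^ δ * ((k:ℝ) ^ δ)⁻¹ * Real.exp δ) * (k:ℝ) ^ p :=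
          mul_le_mul_of_nonneg_right hγkb (Real.rpow_nonneg hkpos.le p)
      _ = (Real.exp δ * γ j * (j:ℝ) ^ δ) * (((k:ℝ) ^ δ)⁻¹ * (k:ℝ) ^ p) := by ring
      _ = (Real.exp δ * γ j * (j:ℝ) ^ δ) * (k:ℝ) ^ (p - δ) := by rw [e2]
  calc ∑ k ∈ Finset.Ico N j, ε k
      ≤ ∑ k ∈ Finset.Ico N j, (Real.exp δ * γ j * (j:ℝ) ^ δ) * (k:ℝ) ^ (p - δ) :=
        Finset.sum_le_sum hterm
    _ = (Real.exp δ * γ j * (j:ℝ) ^ δ) * ∑ k ∈ Finset.Ico N j, (k:ℝ) ^ (p - δ) := by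
        rw [Finset.mul_sum]
    _ ≤ (Real.exp δ * γ j * (j:ℝ) ^ δ) * ((j:ℝ) ^ ((p-δ)+1) / ((p-δ)+1)) := by
        refine mul_le_mul_of_nonneg_left ?_ ?_
        · exact sum_rpow_ub (by linarith) (by linarith) N j hN1 hj
        · positivity
    _ = Real.exp δ * γ j * (j:ℝ) ^ (p+1) / (p+1-δ) := by
        have e3 : (j:ℝ) ^ δ * (j:ℝ) ^ ((p-δ)+1) = (j:ℝ) ^ (p+1) := by
          rw [← Real.rpow_add hjpos]; ring_nf
        rw [← e3]
        have : (p-δ)+1 = p+1-δ := by ring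
        rw [this]
        ring

lemma claimB (γ : ℝ → ℝ) (hγpos : ∀ u : ℝ, 1 ≤ u → 0 < γ u)
    (p : ℝ) (hp₁ : -1 < p) (hp₂ : p < 0)
    (ε : ℕ → ℝ) (hε : ∀ j : ℕ, 1 ≤ j → ε j = γ j * (j : ℝ) ^ p)
    {δ : ℝ} (hδ0 : 0 < δ) (hδ2 : δ < -p) (N : ℕ) (hN1 : 1 ≤ N)
    (hPot : ∀ j k : ℕ, N ≤ j → j ≤ k →
      |Real.log (γ k) - Real.log (γ j)| ≤ δ * (Real.log k - Real.log j + 1)) :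
    ∀ j : ℕ, N ≤ j →
      Real.exp (-δ) * γ j * (((j:ℝ) ^ δ)⁻¹)
          * (((j:ℝ) ^ (p+δ+1) - (N:ℝ) ^ (p+δ+1)) / (p+δ+1))
        ≤ ∑ k ∈ Finset.Ico 1 j, ε k := by
  intro j hj
  have hj1 : 1 ≤ j := le_trans hN1 hj
  have hjR : (1:ℝ) ≤ (j:ℝ) := by exact_mod_cast hj1
  have hjpos : (0:ℝ) < j := by linarith
  have hγj : 0 < γ j := hγpos _ hjR
  have hεnn : ∀ k : ℕ, 1 ≤ k → 0 ≤ ε k := by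
    intro k hk
    have hkR : (1:ℝ) ≤ (k:ℝ) := by exact_mod_cast hk
    rw [hε k hk]
    have hkpos : (0:ℝ) ≤ (k:ℝ) := by linarith
    exact mul_nonneg (hγpos _ hkR).le (Real.rpow_nonneg hkpos p)
  have hsub : ∑ k ∈ Finset.Ico N j, ε k ≤ ∑ k ∈ Finset.Ico 1 j, ε k := by
    refine Finset.sum_le_sum_of_subset_of_nonneg (Finset.Ico_subset_Ico hN1 le_rfl) ?_
    intro k hk _
    exact hεnn k (Finset.mem_Ico.mp hk).1
  refine le_trans ?_ hsub
  have hterm : ∀ k ∈ Finset.Ico N j,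
      (Real.exp (-δ) * γ j * (((j:ℝ) ^ δ)⁻¹)) * (k:ℝ) ^ (p + δ) ≤ ε k := by
    intro k hk
    obtain ⟨hkN, hkj⟩ := Finset.mem_Ico.mp hk
    have hk1 : 1 ≤ k := le_trans hN1 hkN
    have hkR : (1:ℝ) ≤ (k:ℝ) := by exact_mod_cast hk1
    have hkpos : (0:ℝ) < k := by linarith
    have hγk : 0 < γ k := hγpos _ hkR
    have hpot := hPot k j hkN (le_of_lt hkj)
    have hlog : Real.log (γ j) - δ * (Real.log j - Real.log k) - δ ≤ Real.log (γ k) := by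
      have h1 : Real.log (γ j) - Real.log (γ k) ≤ |Real.log (γ j) - Real.log (γ k)| :=
        le_abs_self _
      nlinarith [hpot]
    have hγkb : γ j * (((j:ℝ) ^ δ)⁻¹) * (k:ℝ) ^ δ * Real.exp (-δ) ≤ γ k := by
      have e1 : γ j * (((j:ℝ) ^ δ)⁻¹) * (k:ℝ) ^ δ * Real.exp (-δ)
          = Real.exp (Real.log (γ j) + (-(δ * Real.log j)) + δ * Real.log k + (-δ)) := by
        rw [Real.exp_add, Real.exp_add, Real.exp_add, Real.exp_log hγj, Real.exp_neg,
          Real.exp_neg, Real.rpow_def_of_pos hjpos, Real.rpow_def_of_pos hkpos,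
          mul_comm δ (Real.log j), mul_comm δ (Real.log k)]
      rw [e1, ← Real.exp_log hγk]
      apply Real.exp_le_exp.mpr
      linarith
    have e2 : (k:ℝ) ^ δ * (k:ℝ) ^ p = (k:ℝ) ^ (p + δ) := by
      rw [← Real.rpow_add hkpos]
      ring_nf
    rw [hε k hk1]
    calc (Real.exp (-δ) * γ j * (((j:ℝ) ^ δ)⁻¹)) * (k:ℝ) ^ (p + δ)
        = (γ j * (((j:ℝ) ^ δ)⁻¹) * (k:ℝ) ^ δ * Real.exp (-δ)) * (k:ℝ) ^ p := by
          rw [← e2]; ring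
      _ ≤ γ k * (k:ℝ) ^ p :=
          mul_le_mul_of_nonneg_right hγkb (Real.rpow_nonneg hkpos.le p)
  calc Real.exp (-δ) * γ j * (((j:ℝ) ^ δ)⁻¹)
        * (((j:ℝ) ^ (p+δ+1) - (N:ℝ) ^ (p+δ+1)) / (p+δ+1))
      ≤ (Real.exp (-δ) * γ j * (((j:ℝ) ^ δ)⁻¹)) * ∑ k ∈ Finset.Ico N j, (k:ℝ) ^ (p+δ) := by
        refine mul_le_mul_of_nonneg_left ?_ ?_
        · have := sum_rpow_lb (q := p + δ) (by linarith) (by linarith) N j hN1 hj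
          have heq : p + δ + 1 = (p + δ) + 1 := by ring
          rw [heq]
          exact this
        · positivity
    _ ≤ ∑ k ∈ Finset.Ico N j, ε k := by
        rw [Finset.mul_sum]
        exact Finset.sum_le_sum hterm

lemma key_limit (γ : ℝ → ℝ) (hmeas : Measurable γ) (hγpos : ∀ u : ℝ, 1 ≤ u → 0 < γ u)
    (hsv : ∀ a : ℝ, 0 < a → Tendsto (fun u : ℝ => γ (a * u) / γ u) atTop (nhds 1))
    (p : ℝ) (hp₁ : -1 < p) (hp₂ : p < 0)
    (ε : ℕ → ℝ) (hε : ∀ j : ℕ, 1 ≤ j → ε j = γ j * (j : ℝ) ^ p) :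
    Tendsto (fun j : ℕ => (p+1) * (∑ k ∈ Finset.Ico 1 j, ε k) / (γ j * (j:ℝ) ^ (p+1)))
      atTop (nhds 1) := by
  have hp1 : (0:ℝ) < p + 1 := by linarith
  have hεpos : ∀ k : ℕ, 1 ≤ k → 0 < ε k := by
    intro k hk
    have hkR : (1:ℝ) ≤ (k:ℝ) := by exact_mod_cast hk
    rw [hε k hk]
    exact mul_pos (hγpos _ hkR) (Real.rpow_pos_of_pos (by linarith) p)
  have hTnn : ∀ j : ℕ, 0 ≤ ∑ k ∈ Finset.Ico 1 j, ε k := fun j =>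
    Finset.sum_nonneg fun k hk => (hεpos k (Finset.mem_Ico.mp hk).1).le
  have hDpos : ∀ j : ℕ, 1 ≤ j → 0 < γ j * (j:ℝ) ^ (p+1) := by
    intro j hj
    have hjR : (1:ℝ) ≤ (j:ℝ) := by exact_mod_cast hj
    exact mul_pos (hγpos _ hjR) (Real.rpow_pos_of_pos (by linarith) _)
  have Dtop : Tendsto (fun j : ℕ => γ j * (j:ℝ) ^ (p+1)) atTop atTop :=
    grow_pos γ hmeas hγpos hsv hp1
  rw [tendsto_order]
  constructor
  · -- lower bounds: ∀ c < 1, eventually c < f j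
    intro c hc
    rcases le_or_gt c 0 with hc0 | hc0
    · filter_upwards [Filter.eventually_ge_atTop 2] with j hj
      have hj1 : (1:ℕ) ≤ j := by omega
      have hone : (1:ℕ) ∈ Finset.Ico 1 j := Finset.mem_Ico.mpr ⟨le_refl 1, by omega⟩
      have hT1 : ε 1 ≤ ∑ k ∈ Finset.Ico 1 j, ε k :=
        Finset.single_le_sum (fun k hk => (hεpos k (Finset.mem_Ico.mp hk).1).le) hone
      have hT : 0 < ∑ k ∈ Finset.Ico 1 j, ε k := lt_of_lt_of_le (hεpos 1 le_rfl) hT1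
      exact lt_of_le_of_lt hc0 (div_pos (mul_pos hp1 hT) (hDpos j hj1))
    · -- 0 < c < 1
      set G : ℝ → ℝ := fun d => Real.exp (-d) * (p+1) / (p+1+d) with hG
      have hGt : Tendsto G (nhds 0) (nhds 1) := by
        have hGc : ContinuousAt G 0 := by
          apply ContinuousAt.div
          · exact ((Real.continuous_exp.comp continuous_neg).continuousAt).mul continuousAt_const
          · exact (continuous_const.add continuous_id).continuousAt
          · simpa using hp1.ne'
        have hG0 : G 0 = 1 := by
          simp only [hG, neg_zero, Real.exp_zero, one_mul, add_zero]
          field_simp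
        rw [← hG0]
        exact hGc.tendsto
      have e1 : ∀ᶠ d in nhdsWithin 0 (Set.Ioi 0), (1+c)/2 < G d :=
        nhdsWithin_le_nhds (hGt.eventually_const_lt (by linarith : (1+c)/2 < 1))
      have e2 : ∀ᶠ d in nhdsWithin 0 (Set.Ioi 0), d < -p :=
        nhdsWithin_le_nhds (Filter.eventually_of_mem
          (Iio_mem_nhds (by linarith : (0:ℝ) < -p)) fun d hd => hd)
      have e3 : ∀ᶠ d in nhdsWithin 0 (Set.Ioi 0), (0:ℝ) < d :=
        Filter.eventually_of_mem self_mem_nhdsWithin fun d hd => hd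
      obtain ⟨δ, hδG, hδp, hδ0⟩ := (e1.and (e2.and e3)).exists
      obtain ⟨N, hN1, hPot⟩ := potter γ hmeas hγpos hsv hδ0
      have hB := claimB γ hγpos p hp₁ hp₂ ε hε hδ0 hδp N hN1 hPot
      have hq1 : (0:ℝ) < p + δ + 1 := by linarith
      have hr : Tendsto (fun j : ℕ => (N:ℝ) ^ (p+δ+1) * (j:ℝ) ^ (-(p+δ+1)))
          atTop (nhds 0) := by
        have h0 : Tendsto (fun x : ℝ => x ^ (-(p+δ+1))) atTop (nhds 0) :=
          tendsto_rpow_neg_atTop hq1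
        have := (h0.comp tendsto_natCast_atTop_atTop).const_mul ((N:ℝ) ^ (p+δ+1))
        simpa using this
      have hrev : ∀ᶠ j : ℕ in atTop,
          (N:ℝ) ^ (p+δ+1) * (j:ℝ) ^ (-(p+δ+1)) < (1-c)/(1+c) :=
        hr.eventually_lt_const (div_pos (by linarith) (by linarith))
      filter_upwards [Filter.eventually_ge_atTop N, Filter.eventually_ge_atTop 1, hrev]
        with j hjN hj1 hjr
      have hjR : (1:ℝ) ≤ (j:ℝ) := by exact_mod_cast hj1
      have hjpos : (0:ℝ) < j := by linarith
      have hγj : 0 < γ j := hγpos _ hjR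
      set a : ℝ := (j:ℝ) ^ δ with ha
      set b : ℝ := (j:ℝ) ^ (p+1) with hb
      set M : ℝ := (N:ℝ) ^ (p+δ+1) with hM
      have hapos : 0 < a := Real.rpow_pos_of_pos hjpos δ
      have hbpos : 0 < b := Real.rpow_pos_of_pos hjpos (p+1)
      have eb : (j:ℝ) ^ (p+δ+1) = b * a := by
        rw [hb, ha, ← Real.rpow_add hjpos]
        ring_nf
      have er : (j:ℝ) ^ (-(p+δ+1)) = (b * a)⁻¹ := by
        rw [← eb, ← Real.rpow_neg hjpos.le]
      rw [er] at hjr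
      have h6 : Real.exp (-δ) * γ j * a⁻¹ * ((b * a - M)/(p+δ+1))
          ≤ ∑ k ∈ Finset.Ico 1 j, ε k := by
        have := hB j hjN
        rwa [eb] at this
      have h5 : G δ * (1 - M * (b*a)⁻¹)
          ≤ (p+1) * (∑ k ∈ Finset.Ico 1 j, ε k) / (γ j * b) := by
        have hnum : (p+1) * (Real.exp (-δ) * γ j * a⁻¹ * ((b * a - M)/(p+δ+1)))
            ≤ (p+1) * (∑ k ∈ Finset.Ico 1 j, ε k) :=
          mul_le_mul_of_nonneg_left h6 hp1.le
        calc G δ * (1 - M * (b*a)⁻¹)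
            = (p+1) * (Real.exp (-δ) * γ j * a⁻¹ * ((b * a - M)/(p+δ+1))) / (γ j * b) := by
              simp only [hG]
              field_simp
              ring
          _ ≤ (p+1) * (∑ k ∈ Finset.Ico 1 j, ε k) / (γ j * b) :=
              div_le_div_of_nonneg_right hnum (mul_pos hγj hbpos).le
      have hfac : 2*c/(1+c) < 1 - M * (b*a)⁻¹ := by
        have heq : (1-c)/(1+c) + 2*c/(1+c) = 1 := by field_simp; ring
        linarith
      have hc2 : c < G δ * (1 - M * (b*a)⁻¹) := by
        calc c = (1+c)/2 * (2*c/(1+c)) := by field_simp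
          _ < G δ * (1 - M * (b*a)⁻¹) :=
            mul_lt_mul'' hδG hfac (by positivity) (by positivity)
      exact lt_of_lt_of_le hc2 h5
  · -- upper bounds: ∀ c > 1, eventually f j < c
    intro c hc
    set F : ℝ → ℝ := fun d => Real.exp d * (p+1) / (p+1-d) with hF
    have hFt : Tendsto F (nhds 0) (nhds 1) := by
      have hFc : ContinuousAt F 0 := by
        apply ContinuousAt.div
        · exact (Real.continuous_exp.continuousAt).mul continuousAt_const
        · exact (continuous_const.sub continuous_id).continuousAt
        · simpa using hp1.ne'
      have hF0 : F 0 = 1 := by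
        simp only [hF, Real.exp_zero, one_mul, sub_zero]
        field_simp
      rw [← hF0]
      exact hFc.tendsto
    have e1 : ∀ᶠ d in nhdsWithin 0 (Set.Ioi 0), F d < (1+c)/2 :=
      nhdsWithin_le_nhds (hFt.eventually_lt_const (by linarith : (1:ℝ) < (1+c)/2))
    have e2 : ∀ᶠ d in nhdsWithin 0 (Set.Ioi 0), d < p + 1 :=
      nhdsWithin_le_nhds (Filter.eventually_of_mem
        (Iio_mem_nhds (by linarith : (0:ℝ) < p + 1)) fun d hd => hd)
    have e3 : ∀ᶠ d in nhdsWithin 0 (Set.Ioi 0), (0:ℝ) < d :=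
      Filter.eventually_of_mem self_mem_nhdsWithin fun d hd => hd
    obtain ⟨δ, hδF, hδp, hδ0⟩ := (e1.and (e2.and e3)).exists
    obtain ⟨N, hN1, hPot⟩ := potter γ hmeas hγpos hsv hδ0
    have hA := claimA γ hγpos p hp₁ hp₂ ε hε hδ0 hδp N hN1 hPot
    set C₀ : ℝ := ∑ k ∈ Finset.Ico 1 N, ε k with hC₀
    have hsmallterm : Tendsto (fun j : ℕ => (p+1) * C₀ / (γ j * (j:ℝ) ^ (p+1)))
        atTop (nhds 0) := tendsto_const_nhds.div_atTop Dtop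
    have hev : ∀ᶠ j : ℕ in atTop,
        (p+1) * C₀ / (γ j * (j:ℝ) ^ (p+1)) < c - (1+c)/2 :=
      hsmallterm.eventually_lt_const (by linarith)
    filter_upwards [Filter.eventually_ge_atTop N, Filter.eventually_ge_atTop 1, hev]
      with j hjN hj1 hjs
    have hjR : (1:ℝ) ≤ (j:ℝ) := by exact_mod_cast hj1
    have hjpos : (0:ℝ) < j := by linarith
    have hγj : 0 < γ j := hγpos _ hjR
    have hbpos : 0 < (j:ℝ) ^ (p+1) := Real.rpow_pos_of_pos hjpos (p+1)
    have hD : 0 < γ j * (j:ℝ) ^ (p+1) := mul_pos hγj hbpos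
    have hnum : (p+1) * (∑ k ∈ Finset.Ico 1 j, ε k)
        ≤ (p+1) * C₀ + (p+1) * (Real.exp δ * γ j * (j:ℝ) ^ (p+1) / (p+1-δ)) := by
      have := mul_le_mul_of_nonneg_left (hA j hjN) hp1.le
      linarith [this]
    calc (p+1) * (∑ k ∈ Finset.Ico 1 j, ε k) / (γ j * (j:ℝ) ^ (p+1))
        ≤ ((p+1) * C₀ + (p+1) * (Real.exp δ * γ j * (j:ℝ) ^ (p+1) / (p+1-δ)))
            / (γ j * (j:ℝ) ^ (p+1)) := div_le_div_of_nonneg_right hnum hD.le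
      _ = (p+1) * C₀ / (γ j * (j:ℝ) ^ (p+1)) + Real.exp δ * (p+1) / (p+1-δ) := by
          field_simp
      _ < (c - (1+c)/2) + (1+c)/2 := by
          have : Real.exp δ * (p+1) / (p+1-δ) = F δ := rfl
          rw [this]
          exact add_lt_add hjs hδF
      _ = c := by ring

/-- For slowly varying `γ` and `p ∈ (-1,0)`, the partial sums of `ε_j = γ(j) j^p` diverge,
the scales `S_j = exp(Σ_{k=1}^{j-1} ε_k)` diverge, yet `log S_j / j → 0` (subexponential
growth), and `(p+1) log S_j / (γ(j) j^{p+1}) → 1`. -/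
theorem divergent_subexponential_scales
    (γ : ℝ → ℝ) (hmeas : Measurable γ) (hγpos : ∀ u : ℝ, 1 ≤ u → 0 < γ u)
    (hsv : ∀ a : ℝ, 0 < a → Tendsto (fun u : ℝ => γ (a * u) / γ u) atTop (nhds 1))
    (p : ℝ) (hp₁ : -1 < p) (hp₂ : p < 0)
    (ε : ℕ → ℝ) (hε : ∀ j : ℕ, 1 ≤ j → ε j = γ j * (j : ℝ) ^ p)
    (S : ℕ → ℝ) (hS : ∀ j, S j = Real.exp (∑ k ∈ Finset.Ico 1 j, ε k)) :
    Tendsto (fun j : ℕ => ∑ k ∈ Finset.Ico 1 j, ε k) atTop atTop ∧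
      Tendsto S atTop atTop ∧
      Tendsto (fun j : ℕ => Real.log (S j) / (j : ℝ)) atTop (nhds 0) ∧
      Tendsto (fun j : ℕ =>
          (p + 1) * Real.log (S j) / (γ j * (j : ℝ) ^ (p + 1))) atTop (nhds 1) := by
  have hp1 : (0:ℝ) < p + 1 := by linarith
  have KEY := key_limit γ hmeas hγpos hsv p hp₁ hp₂ ε hε
  have Dtop : Tendsto (fun j : ℕ => γ j * (j:ℝ) ^ (p+1)) atTop atTop :=
    grow_pos γ hmeas hγpos hsv hp1
  have hsmall : Tendsto (fun j : ℕ => γ j * (j:ℝ) ^ p) atTop (nhds 0) :=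
    grow_neg γ hmeas hγpos hsv hp₂
  have hDpos : ∀ j : ℕ, 1 ≤ j → 0 < γ j * (j:ℝ) ^ (p+1) := by
    intro j hj
    have hjR : (1:ℝ) ≤ (j:ℝ) := by exact_mod_cast hj
    exact mul_pos (hγpos _ hjR) (Real.rpow_pos_of_pos (by linarith) _)
  have hlog : ∀ j, Real.log (S j) = ∑ k ∈ Finset.Ico 1 j, ε k := fun j => by
    rw [hS j, Real.log_exp]
  -- (1)
  have h1 : Tendsto (fun j : ℕ => ∑ k ∈ Finset.Ico 1 j, ε k) atTop atTop := by
    have hdiv : Tendsto (fun j : ℕ => (γ j * (j:ℝ) ^ (p+1)) / (p+1)) atTop atTop :=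
      Dtop.atTop_div_const hp1
    have hmul := Filter.Tendsto.pos_mul_atTop one_pos KEY hdiv
    refine hmul.congr' ?_
    filter_upwards [Filter.eventually_ge_atTop 1] with j hj
    have hD := (hDpos j hj).ne'
    field_simp
    exact mul_div_cancel_right₀ _ (hγpos _ (by exact_mod_cast hj)).ne'
  -- (2)
  have h2 : Tendsto S atTop atTop := by
    have := Real.tendsto_exp_atTop.comp h1
    exact this.congr fun j => (hS j).symm
  -- (3)
  have h3 : Tendsto (fun j : ℕ => Real.log (S j) / (j : ℝ)) atTop (nhds 0) := by
    have hmul := (KEY.mul hsmall).div_const (p+1)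
    have h0 : (1 : ℝ) * 0 / (p+1) = 0 := by ring
    rw [h0] at hmul
    refine hmul.congr' ?_
    filter_upwards [Filter.eventually_ge_atTop 1] with j hj
    have hjR : (1:ℝ) ≤ (j:ℝ) := by exact_mod_cast hj
    have hjpos : (0:ℝ) < j := by linarith
    have hγj : 0 < γ j := hγpos _ hjR
    have hppos : (0:ℝ) < (j:ℝ) ^ p := Real.rpow_pos_of_pos hjpos p
    have hjpow : (j:ℝ) ^ (p+1) = (j:ℝ) ^ p * (j:ℝ) := Real.rpow_add_one hjpos.ne' p
    rw [hlog j, hjpow]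
    field_simp
  -- (4)
  have h4 : Tendsto (fun j : ℕ =>
      (p + 1) * Real.log (S j) / (γ j * (j : ℝ) ^ (p + 1))) atTop (nhds 1) :=
    KEY.congr fun j => by rw [hlog j]
  exact ⟨h1, h2, h3, h4⟩
end

section
/- Fix η > 0 and q ∈ (0,1), and set ε_k = η q (log k)^{q−1}/k for integers k ≥ 2 (log-power exponential scales). Define S_j = exp(Σ_{k=2}^{j−1} ε_k) for j ≥ 3. Then (log S_j)/(η (log j)^q) → 1 as j → ∞ (so S_j grows like exp(η (log j)^q) at logarithmic order), and the relative bandwidth ratio Δ_j = (S_{j+1} − S_{j−1})/S_j satisfies (j (log j)^{1−q})·Δ_j → 2ηq as j → ∞. -/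
open Filter Real

private lemma tele_Ico (f : ℕ → ℝ) {a b : ℕ} (h : a ≤ b) :
    ∑ k ∈ Finset.Ico a b, (f (k+1) - f k) = f b - f a := by
  induction b, h using Nat.le_induction with
  | base => simp
  | succ n hn ih => rw [Finset.sum_Ico_succ_top hn, ih]; ring

private lemma g_deriv {q x : ℝ} (hx : 1 < x) :
    HasDerivAt (fun u : ℝ => (Real.log u) ^ q) (q * (Real.log x) ^ (q - 1) / x) x := by
  have hlog : 0 < Real.log x := Real.log_pos hx
  have h1 : HasDerivAt Real.log (1 / x) x :=
    (Real.hasDerivAt_log (by linarith)).congr_deriv (by rw [one_div])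
  have h2 := (Real.hasDerivAt_rpow_const (p := q) (Or.inl hlog.ne')).comp x h1
  refine h2.congr_deriv ?_
  ring

private lemma g_mvt {q a b : ℝ} (ha : 2 ≤ a) (hab : a < b) :
    ∃ c ∈ Set.Ioo a b,
      (Real.log b) ^ q - (Real.log a) ^ q = q * (Real.log c) ^ (q - 1) / c * (b - a) := by
  obtain ⟨c, hc, hceq⟩ := exists_hasDerivAt_eq_slope (fun u : ℝ => (Real.log u) ^ q)
    (fun u => q * (Real.log u) ^ (q - 1) / u) hab
    (fun x hx => by
      have : (1:ℝ) < x := by simp only [Set.mem_Icc] at hx; linarith [hx.1]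
      exact (g_deriv this).continuousAt.continuousWithinAt)
    (fun x hx => g_deriv (by simp only [Set.mem_Ioo] at hx; linarith [hx.1]))
  refine ⟨c, hc, ?_⟩
  rw [hceq, div_mul_cancel₀]
  exact sub_ne_zero.mpr hab.ne'

private lemma phi_anti {q : ℝ} (hq₂ : q < 1) {x y : ℝ} (hx : 2 ≤ x) (hxy : x ≤ y) (hq : 0 ≤ q) :
    q * (Real.log y) ^ (q - 1) / y ≤ q * (Real.log x) ^ (q - 1) / x := by
  have hx0 : (0:ℝ) < x := by linarith
  have hy0 : (0:ℝ) < y := by linarith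
  have hlx : 0 < Real.log x := Real.log_pos (by linarith)
  have h1 : (Real.log y) ^ (q-1) ≤ (Real.log x) ^ (q-1) :=
    Real.rpow_le_rpow_of_nonpos hlx (Real.log_le_log hx0 hxy) (by linarith)
  have h2 : (0:ℝ) ≤ (Real.log y) ^ (q-1) := Real.rpow_nonneg (Real.log_nonneg (by
    have := Real.log_le_log hx0 hxy; linarith)) _
  rw [div_le_div_iff₀ hy0 hx0]
  have := mul_le_mul h1 hxy hx0.le (by positivity)
  nlinarith

/-- Log 3 ≥ 1. -/
private lemma one_le_log_three : (1:ℝ) ≤ Real.log 3 := by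
  rw [Real.le_log_iff_exp_le (by norm_num)]
  exact (Real.exp_one_lt_d9.le.trans (by norm_num))

/-- Log-power exponential scales: with `ε_k = η q (log k)^{q-1}/k`, `q ∈ (0,1)`, and
`S_j = exp(Σ_{k=2}^{j-1} ε_k)`, we have `log S_j / (η (log j)^q) → 1` and
`(j (log j)^{1-q}) Δ_j → 2ηq`, where `Δ_j = (S_{j+1} - S_{j-1})/S_j`. -/
theorem log_power_exponential_scales
    (η q : ℝ) (hη : 0 < η) (hq₁ : 0 < q) (hq₂ : q < 1)
    (ε : ℕ → ℝ) (hε : ∀ k : ℕ, 2 ≤ k → ε k = η * q * (Real.log k) ^ (q - 1) / (k : ℝ))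
    (S : ℕ → ℝ) (hS : ∀ j, S j = Real.exp (∑ k ∈ Finset.Ico 2 j, ε k)) :
    Tendsto (fun j : ℕ => Real.log (S j) / (η * (Real.log j) ^ q)) atTop (nhds 1) ∧
      Tendsto (fun j : ℕ =>
          (((j : ℝ) + 1) * (Real.log ((j : ℝ) + 1)) ^ (1 - q)) *
            ((S (j + 2) - S j) / S (j + 1)))
        atTop (nhds (2 * η * q)) := by
  set φ : ℕ → ℝ := fun k => q * (Real.log k) ^ (q - 1) / (k : ℝ) with hφ
  set f : ℕ → ℝ := fun k => (Real.log k) ^ q with hf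
  set T : ℕ → ℝ := fun j => ∑ k ∈ Finset.Ico 3 j, φ k with hT
  -- basic facts
  have hcast3 : ∀ k : ℕ, 3 ≤ k → (3:ℝ) ≤ (k:ℝ) := fun k hk => by exact_mod_cast hk
  have hlogk : ∀ k : ℕ, 3 ≤ k → 1 ≤ Real.log k := fun k hk =>
    one_le_log_three.trans (Real.log_le_log (by norm_num) (hcast3 k hk))
  -- term bounds
  have term_upper : ∀ k : ℕ, 3 ≤ k → f (k+1) - f k ≤ φ k := by
    intro k hk
    have h3 : (3:ℝ) ≤ (k:ℝ) := hcast3 k hk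
    obtain ⟨c, hc, hceq⟩ := g_mvt (q := q) (a := (k:ℝ)) (b := (k:ℝ)+1) (by linarith) (by linarith)
    have : f (k+1) - f k = q * (Real.log c) ^ (q-1) / c := by
      simp only [hf]
      push_cast
      rw [hceq]; ring
    rw [this]
    exact phi_anti hq₂ (by linarith) hc.1.le hq₁.le
  have term_lower : ∀ i : ℕ, 2 ≤ i → φ (i+1) ≤ f (i+1) - f i := by
    intro i hi
    have h2 : (2:ℝ) ≤ (i:ℝ) := by exact_mod_cast hi
    obtain ⟨c, hc, hceq⟩ := g_mvt (q := q) (a := (i:ℝ)) (b := (i:ℝ)+1) (by linarith) (by linarith)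
    have heq : f (i+1) - f i = q * (Real.log c) ^ (q-1) / c := by
      simp only [hf]
      push_cast
      rw [hceq]; ring
    rw [heq]
    have : q * (Real.log ((i:ℝ)+1)) ^ (q-1) / ((i:ℝ)+1) ≤ q * (Real.log c) ^ (q-1) / c :=
      phi_anti hq₂ (by linarith [hc.1]) hc.2.le hq₁.le
    simpa [hφ, Nat.cast_add, Nat.cast_one] using this
  -- sum bounds, for j ≥ 3
  have sum_lower : ∀ j : ℕ, 3 ≤ j → f j - f 3 ≤ T j := by
    intro j hj
    rw [← tele_Ico f hj]
    apply Finset.sum_le_sum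
    intro k hk
    exact term_upper k (Finset.mem_Ico.mp hk).1
  have log_nat_nonneg : ∀ k : ℕ, 0 ≤ Real.log k := by
    intro k
    rcases Nat.eq_zero_or_pos k with rfl | hk
    · simp
    · exact Real.log_nonneg (by exact_mod_cast hk)
  have log_nat_mono : ∀ m n : ℕ, m ≤ n → Real.log m ≤ Real.log n := by
    intro m n hmn
    rcases Nat.eq_zero_or_pos m with rfl | hm
    · simpa using log_nat_nonneg n
    · exact Real.log_le_log (by exact_mod_cast hm) (by exact_mod_cast hmn)
  have f_nonneg : ∀ k : ℕ, 0 ≤ f k := fun k => Real.rpow_nonneg (log_nat_nonneg k) q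
  have f_mono : ∀ m n : ℕ, m ≤ n → f m ≤ f n := fun m n hmn =>
    Real.rpow_le_rpow (log_nat_nonneg m) (log_nat_mono m n hmn) hq₁.le
  have sum_upper : ∀ j : ℕ, 3 ≤ j → T j ≤ f j := by
    intro j hj
    have h1 : T j ≤ ∑ k ∈ Finset.Ico 3 j, (f k - f (k-1)) := by
      apply Finset.sum_le_sum
      intro k hk
      have hk3 := (Finset.mem_Ico.mp hk).1
      have h := term_lower (k-1) (by omega)
      have hkk : k - 1 + 1 = k := by omega
      rwa [hkk] at h
    have h2 : ∑ k ∈ Finset.Ico 3 j, (f k - f (k-1)) = f (j-1) - f 2 := by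
      have := tele_Ico (fun k => f (k-1)) hj
      simpa using this
    calc T j ≤ f (j-1) - f 2 := by rw [← h2]; exact h1
      _ ≤ f j := by
          have := f_mono (j-1) j (Nat.sub_le j 1)
          have h3 := f_nonneg 2
          linarith

  -- f j → atTop
  have hf_top : Tendsto f atTop atTop := by
    have h1 : Tendsto (fun j : ℕ => Real.log j) atTop atTop :=
      Real.tendsto_log_atTop.comp tendsto_natCast_atTop_atTop
    exact (tendsto_rpow_atTop hq₁).comp h1
  have hfpos : ∀ᶠ j : ℕ in atTop, 0 < f j := hf_top.eventually_gt_atTop 0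
  -- T j / f j → 1
  have hTf : Tendsto (fun j => T j / f j) atTop (nhds 1) := by
    have hlow : Tendsto (fun j : ℕ => 1 - f 3 / f j) atTop (nhds 1) := by
      have := (tendsto_const_nhds (x := (1:ℝ)) (f := atTop)).sub
        (Tendsto.div_atTop (tendsto_const_nhds (x := f 3)) hf_top)
      simpa using this
    refine tendsto_of_tendsto_of_tendsto_of_le_of_le' hlow tendsto_const_nhds ?_ ?_
    · filter_upwards [hfpos, eventually_ge_atTop 3] with j hj hj3
      have h1 := sum_lower j hj3
      calc 1 - f 3 / f j = (f j - f 3) / f j := by rw [sub_div, div_self hj.ne']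
        _ ≤ T j / f j := by gcongr
    · filter_upwards [hfpos, eventually_ge_atTop 3] with j hj hj3
      rw [div_le_one hj]
      exact sum_upper j hj3
  have part1 : Tendsto (fun j : ℕ => Real.log (S j) / (η * (Real.log j) ^ q)) atTop (nhds 1) := by
    have hzero : Tendsto (fun j : ℕ => ε 2 / (η * f j)) atTop (nhds 0) :=
      Tendsto.div_atTop tendsto_const_nhds (Tendsto.const_mul_atTop hη hf_top)
    have hsum := hzero.add hTf
    rw [zero_add] at hsum
    apply hsum.congr'
    filter_upwards [hfpos, eventually_ge_atTop 3] with j hj hj3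
    have hlogS : Real.log (S j) = ε 2 + η * T j := by
      rw [hS j, Real.log_exp, Finset.sum_eq_sum_Ico_succ_bot (by omega : 2 < j)]
      congr 1
      rw [hT, Finset.mul_sum]
      apply Finset.sum_congr rfl
      intro k hk
      have hk3 := (Finset.mem_Ico.mp hk).1
      rw [hε k (by omega), hφ]
      ring
    rw [hlogS]
    have hηf : η * f j ≠ 0 := by positivity
    field_simp
    have hfj : f j * (Real.log (j:ℝ) ^ q)⁻¹ = 1 := mul_inv_cancel₀ hj.ne'
    linear_combination -(ε 2 + η * T j) * hfj

  -- Part 2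
  set B : ℕ → ℝ := fun j => ((j:ℝ)+1) * (Real.log ((j:ℝ)+1)) ^ (1-q) with hB
  have hεpos : ∀ k : ℕ, 3 ≤ k → 0 < ε k := by
    intro k hk
    rw [hε k (by omega)]
    have h1 : 0 < Real.log k := by linarith [hlogk k hk]
    have h2 : (0:ℝ) < k := by have := hcast3 k hk; linarith
    positivity
  have hεlim : Tendsto ε atTop (nhds 0) := by
    refine tendsto_of_tendsto_of_tendsto_of_le_of_le' tendsto_const_nhds
      (tendsto_const_div_atTop_nhds_zero_nat (η * q)) ?_ ?_
    · filter_upwards [eventually_ge_atTop 3] with j hj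
      exact (hεpos j hj).le
    · filter_upwards [eventually_ge_atTop 3] with j hj
      have h2 : (0:ℝ) < j := by have := hcast3 j hj; linarith
      rw [hε j (by omega)]
      calc η * q * (Real.log j) ^ (q-1) / j ≤ η * q * 1 / j := by
            gcongr
            exact Real.rpow_le_one_of_one_le_of_nonpos (hlogk j hj) (by linarith)
        _ = η * q / j := by rw [mul_one]
  have hslope : Tendsto (fun x : ℝ => (Real.exp x - 1) / x) (nhdsWithin 0 {0}ᶜ) (nhds 1) := by
    have h := hasDerivAt_iff_tendsto_slope.mp (Real.hasDerivAt_exp 0)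
    rw [Real.exp_zero] at h
    apply h.congr
    intro x
    simp [slope_def_field]
  have hε1 : Tendsto (fun j : ℕ => ε (j+1)) atTop (nhdsWithin 0 {0}ᶜ) := by
    refine tendsto_nhdsWithin_of_tendsto_nhds_of_eventually_within _
      (hεlim.comp (tendsto_add_atTop_nat 1)) ?_
    filter_upwards [eventually_ge_atTop 2] with j hj
    exact (hεpos (j+1) (by omega)).ne'
  have hεm : Tendsto (fun j : ℕ => -(ε j)) atTop (nhdsWithin 0 {0}ᶜ) := by
    refine tendsto_nhdsWithin_of_tendsto_nhds_of_eventually_within _ (by simpa using hεlim.neg) ?_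
    filter_upwards [eventually_ge_atTop 3] with j hj
    simp only [Set.mem_compl_iff, Set.mem_singleton_iff, neg_eq_zero]
    exact (hεpos j hj).ne'
  have hD1 : Tendsto (fun j : ℕ => (Real.exp (ε (j+1)) - 1) / (ε (j+1))) atTop (nhds 1) :=
    hslope.comp hε1
  have hD2 : Tendsto (fun j : ℕ => (Real.exp (-(ε j)) - 1) / (-(ε j))) atTop (nhds 1) :=
    hslope.comp hεm
  have hBε1 : ∀ j : ℕ, 2 ≤ j → B j * ε (j+1) = η * q := by
    intro j hj
    have hj1 : (0:ℝ) < (j:ℝ) + 1 := by positivity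
    have hL : 0 < Real.log ((j:ℝ)+1) := Real.log_pos (by
      have : (2:ℝ) ≤ (j:ℝ) := by exact_mod_cast hj
      linarith)
    have hLL : (Real.log ((j:ℝ)+1)) ^ (1-q) * (Real.log ((j:ℝ)+1)) ^ (q-1) = 1 := by
      rw [← Real.rpow_add hL]
      norm_num
    rw [hε (j+1) (by omega)]
    push_cast
    have hLne : (Real.log ((j:ℝ)+1)) ^ (1-q) ≠ 0 := by
      have : (0:ℝ) < (Real.log ((j:ℝ)+1)) ^ (1-q) := Real.rpow_pos_of_pos hL _
      exact this.ne'
    field_simp [hB]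
    linear_combination ((j:ℝ)+1) * hLL
  have hterm1 : Tendsto (fun j : ℕ => B j * (Real.exp (ε (j+1)) - 1)) atTop (nhds (η*q)) := by
    have h := hD1.const_mul (η*q)
    rw [mul_one] at h
    apply h.congr'
    filter_upwards [eventually_ge_atTop 2] with j hj
    have hne : ε (j+1) ≠ 0 := (hεpos (j+1) (by omega)).ne'
    rw [← hBε1 j hj]
    field_simp
  -- B j * ε j → η q
  have hG1 : Tendsto (fun j : ℕ => ((j:ℝ)+1)/(j:ℝ)) atTop (nhds 1) := by
    have h := (tendsto_const_nhds (x := (1:ℝ)) (f := atTop)).add tendsto_one_div_atTop_nhds_zero_nat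
    rw [add_zero] at h
    apply h.congr'
    filter_upwards [eventually_ge_atTop 1] with j hj
    have : (0:ℝ) < j := by exact_mod_cast hj
    field_simp
  have hG2 : Tendsto (fun j : ℕ => Real.log ((j:ℝ)+1) / Real.log j) atTop (nhds 1) := by
    have hup : Tendsto (fun j : ℕ => 1 + 1/(j:ℝ)) atTop (nhds 1) := by
      have h := (tendsto_const_nhds (x := (1:ℝ)) (f := atTop)).add tendsto_one_div_atTop_nhds_zero_nat
      rwa [add_zero] at h
    refine tendsto_of_tendsto_of_tendsto_of_le_of_le' tendsto_const_nhds hup ?_ ?_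
    · filter_upwards [eventually_ge_atTop 3] with j hj
      have hlj : 1 ≤ Real.log j := hlogk j hj
      have hmono : Real.log (j:ℝ) ≤ Real.log ((j:ℝ)+1) :=
        Real.log_le_log (by have := hcast3 j hj; linarith) (by linarith)
      rw [le_div_iff₀ (by linarith), one_mul]
      exact hmono
    · filter_upwards [eventually_ge_atTop 3] with j hj
      have h3 : (3:ℝ) ≤ (j:ℝ) := hcast3 j hj
      have hlj : 1 ≤ Real.log j := hlogk j hj
      have hd : Real.log ((j:ℝ)+1) - Real.log j ≤ 1/(j:ℝ) := by
        rw [← Real.log_div (by linarith) (by positivity)]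
        have h1 := Real.log_le_sub_one_of_pos (x := ((j:ℝ)+1)/(j:ℝ)) (by positivity)
        have h2 : ((j:ℝ)+1)/(j:ℝ) - 1 = 1/(j:ℝ) := by field_simp; ring
        linarith
      rw [div_le_iff₀ (by linarith)]
      have hjpos : (0:ℝ) < j := by linarith
      have e1 : (1 + 1/(j:ℝ)) * Real.log j = Real.log j + (1/(j:ℝ)) * Real.log j := by ring
      have e2 : (1/(j:ℝ)) * 1 ≤ (1/(j:ℝ)) * Real.log j :=
        mul_le_mul_of_nonneg_left hlj (by positivity)
      rw [e1]
      linarith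
  have hBε : Tendsto (fun j : ℕ => B j * ε j) atTop (nhds (η*q)) := by
    have hGlim := hG1.mul (hG2.rpow_const (p := 1-q) (Or.inl one_ne_zero))
    rw [one_mul, Real.one_rpow] at hGlim
    have h := hGlim.const_mul (η*q)
    rw [mul_one] at h
    apply h.congr'
    filter_upwards [eventually_ge_atTop 3] with j hj
    have h3 : (3:ℝ) ≤ (j:ℝ) := hcast3 j hj
    have hlj : 1 ≤ Real.log j := hlogk j hj
    have hLpos : 0 < Real.log j := by linarith
    have hL1nonneg : 0 ≤ Real.log ((j:ℝ)+1) := by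
      have := Real.log_le_log (by linarith : (0:ℝ) < (j:ℝ)) (by linarith : (j:ℝ) ≤ (j:ℝ)+1)
      linarith
    have hdiv : (Real.log ((j:ℝ)+1) / Real.log j) ^ (1-q)
        = (Real.log ((j:ℝ)+1)) ^ (1-q) / (Real.log j) ^ (1-q) :=
      Real.div_rpow hL1nonneg hLpos.le (1-q)
    have hneg : (Real.log j) ^ (q-1) = ((Real.log j) ^ (1-q))⁻¹ := by
      rw [← Real.rpow_neg hLpos.le]
      norm_num
    rw [hε j (by omega), hB, hdiv, hneg]
    have hLq : (0:ℝ) < (Real.log j) ^ (1-q) := Real.rpow_pos_of_pos hLpos _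
    field_simp
  have hterm2 : Tendsto (fun j : ℕ => B j * (1 - Real.exp (-(ε j)))) atTop (nhds (η*q)) := by
    have h := hBε.mul hD2
    rw [mul_one] at h
    apply h.congr'
    filter_upwards [eventually_ge_atTop 3] with j hj
    have hne : ε j ≠ 0 := (hεpos j hj).ne'
    have key : (Real.exp (-(ε j)) - 1) / (-(ε j)) = (1 - Real.exp (-(ε j))) / ε j := by
      rw [div_neg, ← neg_div, neg_sub]
    show B j * ε j * ((Real.exp (-(ε j)) - 1) / (-(ε j))) = B j * (1 - Real.exp (-(ε j)))
    rw [key, mul_assoc, mul_div_assoc', mul_comm (ε j), mul_div_assoc, div_self hne, mul_one]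
  have part2 : Tendsto (fun j : ℕ =>
      (((j : ℝ) + 1) * (Real.log ((j : ℝ) + 1)) ^ (1 - q)) *
        ((S (j + 2) - S j) / S (j + 1))) atTop (nhds (2 * η * q)) := by
    have h := hterm1.add hterm2
    have h2q : η * q + η * q = 2 * η * q := by ring
    rw [h2q] at h
    apply h.congr'
    filter_upwards [eventually_ge_atTop 2] with j hj
    have hratio : (S (j+2) - S j) / S (j+1) = Real.exp (ε (j+1)) - Real.exp (-(ε j)) := by
      rw [hS, hS, hS,
        Finset.sum_Ico_succ_top (by omega : 2 ≤ j+1),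
        Finset.sum_Ico_succ_top (by omega : 2 ≤ j)]
      rw [sub_div, ← Real.exp_sub, ← Real.exp_sub]
      congr 2 <;> ring
    rw [hratio, hB]
    ring
  exact ⟨part1, part2⟩
end

section
/- Let γ : [1,∞) → (0,∞) be a measurable slowly varying function (for every a > 0, γ(a u)/γ(u) → 1 as u → ∞), let p ∈ (−1,0), and set ε_j = γ(j) j^p and S_j = exp(Σ_{k=1}^{j−1} ε_k). Then for every β ∈ (0,1], the one-step separation ratio R_j(β) = (S_j − S_{j−1})/S_{j−1}^{1−β} tends to +∞ as j → ∞; in particular R_j(β) > 1 for all sufficiently large j, so the one-step scale increment eventually dominates S_{j−1}^{1−β}. -/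
open Filter Real MeasureTheory Set

lemma uct (h : ℝ → ℝ) (hm : Measurable h)
    (hlim : ∀ t : ℝ, Tendsto (fun x => h (x + t) - h x) atTop (nhds 0))
    {δ : ℝ} (hδ : 0 < δ) :
    ∀ᶠ x : ℝ in atTop, ∀ t ∈ Set.Icc (0:ℝ) 1, |h (x + t) - h x| ≤ δ := by
  by_contra hcon
  rw [Filter.not_eventually] at hcon
  have hfreq : ∀ n : ℕ, ∃ x : ℝ, (n : ℝ) ≤ x ∧ ∃ t ∈ Set.Icc (0:ℝ) 1, δ < |h (x + t) - h x| := by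
    intro n
    rcases (frequently_atTop.mp hcon (n : ℝ)) with ⟨x, hx, hx2⟩
    push_neg at hx2
    obtain ⟨t, ht, ht2⟩ := hx2
    exact ⟨x, hx, t, ht, ht2⟩
  choose x hx t ht hbad using hfreq
  have hxtend : Tendsto x atTop atTop :=
    tendsto_atTop_mono hx (tendsto_natCast_atTop_atTop)
  set y : ℕ → ℝ := fun n => x n + t n with hy
  have hytend : Tendsto y atTop atTop := by
    apply tendsto_atTop_mono (fun n => ?_) hxtend
    have := (ht n).1; simp only [hy]; linarith
  set A : ℕ → Set ℝ := fun N =>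
    Set.Icc (-1:ℝ) 2 ∩ ⋂ (m : ℕ) (_ : N ≤ m), {s | |h (x m + s) - h (x m)| ≤ δ/2} with hA
  set B : ℕ → Set ℝ := fun N =>
    Set.Icc (-1:ℝ) 2 ∩ ⋂ (m : ℕ) (_ : N ≤ m), {s | |h (y m + s) - h (y m)| ≤ δ/2} with hB
  have hmeasset : ∀ (z : ℕ → ℝ) (N : ℕ), MeasurableSet
      (Set.Icc (-1:ℝ) 2 ∩ ⋂ (m : ℕ) (_ : N ≤ m), {s | |h (z m + s) - h (z m)| ≤ δ/2}) := by
    intro z N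
    apply measurableSet_Icc.inter
    apply MeasurableSet.iInter; intro m; apply MeasurableSet.iInter; intro _
    have : Measurable fun s : ℝ => |h (z m + s) - h (z m)| :=
      ((hm.comp (measurable_const.add measurable_id)).sub measurable_const).abs
    exact measurableSet_le this measurable_const
  have hmono : ∀ (z : ℕ → ℝ), Monotone (fun N => Set.Icc (-1:ℝ) 2 ∩ ⋂ (m : ℕ) (_ : N ≤ m),
      {s | |h (z m + s) - h (z m)| ≤ δ/2}) := by
    intro z N M hNM
    apply Set.inter_subset_inter_right
    intro s hs
    simp only [Set.mem_iInter] at hs ⊢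
    intro m hm'; exact hs m (hNM.trans hm')
  have hunion : ∀ (z : ℕ → ℝ), Tendsto z atTop atTop →
      (⋃ N, Set.Icc (-1:ℝ) 2 ∩ ⋂ (m : ℕ) (_ : N ≤ m), {s | |h (z m + s) - h (z m)| ≤ δ/2})
        = Set.Icc (-1:ℝ) 2 := by
    intro z hz
    apply Set.Subset.antisymm
    · exact Set.iUnion_subset fun N => Set.inter_subset_left
    · intro s hs
      have hc := (hlim s).comp hz
      have hev : ∀ᶠ m : ℕ in atTop, |h (z m + s) - h (z m)| ≤ δ/2 := by
        have := (hc.eventually (Metric.ball_mem_nhds (0:ℝ) (by positivity : (0:ℝ) < δ/2)))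
        filter_upwards [this] with m hm'
        simp only [Function.comp, Metric.mem_ball, Real.dist_eq, sub_zero] at hm'
        exact hm'.le
      obtain ⟨N, hN⟩ := hev.exists_forall_of_atTop
      refine Set.mem_iUnion.mpr ⟨N, hs, ?_⟩
      simp only [Set.mem_iInter]; exact fun m hm' => hN m hm'
  -- pick N with large measures
  have hbig : ∀ (z : ℕ → ℝ), Tendsto z atTop atTop →
      ∃ N, ∀ M ≥ N, ENNReal.ofReal (5/2) < volume (Set.Icc (-1:ℝ) 2 ∩ ⋂ (m : ℕ) (_ : M ≤ m),
        {s | |h (z m + s) - h (z m)| ≤ δ/2}) := by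
    intro z hz
    have h1 := tendsto_measure_iUnion_atTop (μ := volume) (hmono z)
    rw [hunion z hz] at h1
    rw [Real.volume_Icc] at h1
    have hlt : ENNReal.ofReal (5/2) < ENNReal.ofReal (2 - (-1)) := by
      rw [ENNReal.ofReal_lt_ofReal_iff (by norm_num)]; norm_num
    exact (h1.eventually (eventually_gt_nhds hlt)).exists_forall_of_atTop
  obtain ⟨N₁, hN₁⟩ := hbig x hxtend
  obtain ⟨N₂, hN₂⟩ := hbig y hytend
  set N := max N₁ N₂ with hN
  have hAbig : ENNReal.ofReal (5/2) < volume (A N) := hN₁ N (le_max_left _ _)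
  have hBbig : ENNReal.ofReal (5/2) < volume (B N) := hN₂ N (le_max_right _ _)
  -- find s
  have hexists : ∃ s ∈ Set.Icc (0:ℝ) 2, s ∈ A N ∧ s - t N ∈ B N := by
    by_contra hno
    push_neg at hno
    have hsub : Set.Icc (0:ℝ) 2 ⊆
        (Set.Icc (-1:ℝ) 2 \ A N) ∪ ((fun s => s + (-(t N))) ⁻¹' (Set.Icc (-1:ℝ) 2 \ B N)) := by
      intro s hs
      by_cases hsA : s ∈ A N
      · right
        have ht1 := (ht N).1; have ht2 := (ht N).2
        simp only [Set.mem_Icc] at hs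
        have hnotB := hno s (by simp only [Set.mem_Icc]; exact hs) hsA
        have heq : s + -(t N) = s - t N := by ring
        refine Set.mem_preimage.mpr ?_
        rw [heq]
        exact ⟨by simp only [Set.mem_Icc]; constructor <;> linarith, hnotB⟩
      · left; exact ⟨⟨by linarith [hs.1], hs.2⟩, hsA⟩
    have hm1 : volume (Set.Icc (-1:ℝ) 2 \ A N) ≤ ENNReal.ofReal (1/2) := by
      rw [measure_diff Set.inter_subset_left (hmeasset x N).nullMeasurableSet
        (((measure_mono Set.inter_subset_left).trans_lt measure_Icc_lt_top).ne), Real.volume_Icc]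
      calc ENNReal.ofReal (2 - (-1)) - volume (A N)
          ≤ ENNReal.ofReal (2 - (-1)) - ENNReal.ofReal (5/2) := by
            exact tsub_le_tsub_left hAbig.le _
        _ ≤ ENNReal.ofReal (1/2) := by
            rw [← ENNReal.ofReal_sub _ (by norm_num)]
            apply ENNReal.ofReal_le_ofReal; norm_num
    have hm2 : volume ((fun s => s + (-(t N))) ⁻¹' (Set.Icc (-1:ℝ) 2 \ B N))
        ≤ ENNReal.ofReal (1/2) := by
      rw [measure_preimage_add_right]
      rw [measure_diff Set.inter_subset_left (hmeasset y N).nullMeasurableSet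
        (((measure_mono Set.inter_subset_left).trans_lt measure_Icc_lt_top).ne), Real.volume_Icc]
      calc ENNReal.ofReal (2 - (-1)) - volume (B N)
          ≤ ENNReal.ofReal (2 - (-1)) - ENNReal.ofReal (5/2) := by
            exact tsub_le_tsub_left hBbig.le _
        _ ≤ ENNReal.ofReal (1/2) := by
            rw [← ENNReal.ofReal_sub _ (by norm_num)]
            apply ENNReal.ofReal_le_ofReal; norm_num
    have := (measure_mono hsub).trans ((measure_union_le _ _).trans (add_le_add hm1 hm2))
    rw [Real.volume_Icc] at this
    rw [← ENNReal.ofReal_add (by norm_num) (by norm_num)] at this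
    rw [ENNReal.ofReal_le_ofReal_iff (by norm_num)] at this
    norm_num at this
  obtain ⟨s, hs02, hsA, hsB⟩ := hexists
  have h1 : |h (x N + s) - h (x N)| ≤ δ/2 := by
    have := hsA.2
    simp only [Set.mem_iInter] at this
    exact this N le_rfl
  have h2 : |h (y N + (s - t N)) - h (y N)| ≤ δ/2 := by
    have := hsB.2
    simp only [Set.mem_iInter] at this
    exact this N le_rfl
  have hyeq : y N + (s - t N) = x N + s := by simp only [hy]; ring
  rw [hyeq] at h2
  have h2' : |h (x N + s) - h (x N + t N)| ≤ δ/2 := by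
    have : y N = x N + t N := by simp only [hy]
    rwa [this] at h2
  have : |h (x N + t N) - h (x N)| ≤ δ := by
    have e : h (x N + t N) - h (x N)
        = (h (x N + s) - h (x N)) - (h (x N + s) - h (x N + t N)) := by ring
    rw [e]
    calc |(h (x N + s) - h (x N)) - (h (x N + s) - h (x N + t N))|
        ≤ |h (x N + s) - h (x N)| + |h (x N + s) - h (x N + t N)| := abs_sub _ _
      _ ≤ δ/2 + δ/2 := add_le_add h1 h2'
      _ = δ := by ring
  exact absurd this (not_le.mpr (hbad N))

lemma linear_lower (h : ℝ → ℝ)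
    (huct : ∀ {δ : ℝ}, 0 < δ →
      ∀ᶠ x : ℝ in atTop, ∀ t ∈ Set.Icc (0:ℝ) 1, |h (x + t) - h x| ≤ δ)
    {δ : ℝ} (hδ : 0 < δ) :
    ∃ X C : ℝ, 0 ≤ X ∧ ∀ x, X ≤ x → C - δ * x ≤ h x := by
  obtain ⟨X₀, hX₀⟩ := (huct hδ).exists_forall_of_atTop
  set X : ℝ := max X₀ 0 with hX
  have hXX₀ : X₀ ≤ X := le_max_left _ _
  have hX0 : 0 ≤ X := le_max_right _ _
  have hind : ∀ n : ℕ, ∀ t ∈ Set.Icc (0:ℝ) 1, h X - δ * (n + 1) ≤ h (X + n + t) := by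
    intro n
    induction n with
    | zero =>
      intro t htI
      have := hX₀ X hXX₀ t htI
      have := abs_le.mp this
      push_cast
      simp only [add_zero]
      linarith [this.1]
    | succ n ih =>
      intro t htI
      have hbase : X ≤ X + n + t := by
        have := htI.1
        have : (0:ℝ) ≤ n := Nat.cast_nonneg n
        nlinarith [htI.1, (Nat.cast_nonneg n : (0:ℝ) ≤ n)]
      have h1 := hX₀ (X + n + t) (hXX₀.trans hbase) 1 (by norm_num)
      have h1 := (abs_le.mp h1).1
      have ihn := ih t htI
      have heq : X + (n+1 : ℕ) + t = (X + n + t) + 1 := by push_cast; ring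
      rw [heq]
      push_cast
      linarith
  refine ⟨X, h X + δ * X - δ, hX0, fun x hx => ?_⟩
  set n : ℕ := ⌊x - X⌋.toNat with hn
  set t : ℝ := Int.fract (x - X) with htdef
  have hfl : (0:ℤ) ≤ ⌊x - X⌋ := Int.floor_nonneg.mpr (by linarith)
  have hncast : (n : ℝ) = ⌊x - X⌋ := by
    rw [hn]; exact_mod_cast congrArg Int.cast (Int.toNat_of_nonneg hfl)
  have hxeq : x = X + n + t := by
    rw [hncast, htdef, Int.fract]; ring
  have htI : t ∈ Set.Icc (0:ℝ) 1 := ⟨Int.fract_nonneg _, (Int.fract_lt_one _).le⟩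
  have hnle : (n : ℝ) ≤ x - X := by rw [hncast]; exact Int.floor_le _
  have := hind n t htI
  rw [← hxeq] at this
  nlinarith [hδ.le]

lemma exp_rpow_mul_rpow_tendsto (A c r q : ℝ) (hA : 0 < A) (hc : 0 < c) (hr : 0 < r) :
    Tendsto (fun x : ℝ => Real.exp (A * x ^ r) * (c * x ^ q)) atTop atTop := by
  have hlog : ∀ᶠ x : ℝ in atTop, |q * Real.log x| ≤ (A/2) * x ^ r := by
    have := (isLittleO_log_rpow_atTop hr).const_mul_left q
    have hb := this.def (by positivity : (0:ℝ) < A/2)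
    filter_upwards [hb, eventually_ge_atTop (1:ℝ)] with x h1 h2
    have hxr : (0:ℝ) ≤ x ^ r := Real.rpow_nonneg (by linarith) r
    rw [abs_mul]
    simpa [abs_of_nonneg hxr, Real.norm_eq_abs, abs_mul] using h1
  have hexp : Tendsto (fun x : ℝ => A * x ^ r + (Real.log c + q * Real.log x)) atTop atTop := by
    have h2 : Tendsto (fun x : ℝ => (A/2) * x ^ r + Real.log c) atTop atTop :=
      ((tendsto_rpow_atTop hr).const_mul_atTop (by positivity)).atTop_add tendsto_const_nhds
    apply tendsto_atTop_mono' _ _ h2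
    filter_upwards [hlog] with x hx
    have := abs_le.mp hx
    linarith [this.1]
  have := Real.tendsto_exp_atTop.comp hexp
  apply this.congr'
  filter_upwards [eventually_gt_atTop (0:ℝ)] with x hx
  simp only [Function.comp]
  rw [Real.exp_add, Real.exp_add, Real.exp_log hc, Real.rpow_def_of_pos hx q]
  ring_nf

/-- For slowly varying `γ`, `p ∈ (-1,0)`, `ε_j = γ(j) j^p`, `S_j = exp(Σ_{k=1}^{j-1} ε_k)`,
and any `β ∈ (0,1]`, the separation ratio `R_j(β) = (S_j - S_{j-1})/S_{j-1}^{1-β}`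
tends to `+∞`; in particular `R_j(β) > 1` eventually. -/
theorem separation_ratio_divergence
    (γ : ℝ → ℝ) (hmeas : Measurable γ) (hγpos : ∀ u : ℝ, 1 ≤ u → 0 < γ u)
    (hsv : ∀ a : ℝ, 0 < a → Tendsto (fun u : ℝ => γ (a * u) / γ u) atTop (nhds 1))
    (p : ℝ) (hp₁ : -1 < p) (hp₂ : p < 0)
    (ε : ℕ → ℝ) (hε : ∀ j : ℕ, 1 ≤ j → ε j = γ j * (j : ℝ) ^ p)
    (S : ℕ → ℝ) (hS : ∀ j, S j = Real.exp (∑ k ∈ Finset.Ico 1 j, ε k)) :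
    ∀ β : ℝ, 0 < β → β ≤ 1 →
      Tendsto (fun j : ℕ => (S (j + 1) - S j) / S j ^ (1 - β)) atTop atTop ∧
      ∀ᶠ j : ℕ in atTop, 1 < (S (j + 1) - S j) / S j ^ (1 - β) := by
  -- the additive version of γ
  set h : ℝ → ℝ := fun x => Real.log (γ (Real.exp x)) with hhdef
  have hhm : Measurable h := Real.measurable_log.comp (hmeas.comp Real.measurable_exp)
  have hhlim : ∀ t : ℝ, Tendsto (fun x => h (x + t) - h x) atTop (nhds 0) := by
    intro t
    have h1 := (hsv (Real.exp t) (Real.exp_pos t)).comp Real.tendsto_exp_atTop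
    have h2 : Tendsto (fun x : ℝ =>
        Real.log (γ (Real.exp t * Real.exp x) / γ (Real.exp x))) atTop (nhds 0) := by
      have := (Real.continuousAt_log one_ne_zero).tendsto.comp h1
      simpa [Function.comp_def] using this
    apply h2.congr'
    filter_upwards [eventually_ge_atTop (max 0 (-t))] with x hx
    have hx0 : (0:ℝ) ≤ x := le_trans (le_max_left _ _) hx
    have hxt : -t ≤ x := le_trans (le_max_right _ _) hx
    have e1 : (1:ℝ) ≤ Real.exp x := Real.one_le_exp hx0
    have e2 : (1:ℝ) ≤ Real.exp (x + t) := Real.one_le_exp (by linarith)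
    have g1 := hγpos _ e1
    have g2 := hγpos _ e2
    have heq : Real.exp t * Real.exp x = Real.exp (x + t) := by
      rw [← Real.exp_add]; ring_nf
    rw [heq, Real.log_div g2.ne' g1.ne']
  -- linear lower bound on h
  set δ : ℝ := (1 + p) / 2 with hδdef
  have hδpos : 0 < δ := by rw [hδdef]; linarith
  obtain ⟨X, C, hX0, hlin⟩ :=
    linear_lower h (fun {δ'} hδ' => uct h hhm hhlim hδ') hδpos
  set c : ℝ := Real.exp C with hcdef
  have hcpos : 0 < c := Real.exp_pos C
  set q : ℝ := p - δ with hqdef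
  set r : ℝ := q + 1 with hrdef
  have hq0 : q < 0 := by rw [hqdef, hδdef]; linarith
  have hrpos : 0 < r := by rw [hrdef, hqdef, hδdef]; linarith
  -- lower bound on γ at naturals
  have hγlb : ∀ j : ℕ, Real.exp X ≤ (j:ℝ) → c * (j:ℝ) ^ (-δ) ≤ γ j := by
    intro j hj
    have hj0 : (0:ℝ) < j := lt_of_lt_of_le (Real.exp_pos X) hj
    have hj1 : (1:ℝ) ≤ j := le_trans (Real.one_le_exp hX0) hj
    have hlogj : X ≤ Real.log j := (Real.le_log_iff_exp_le hj0).mpr hj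
    have hgj : 0 < γ j := hγpos _ hj1
    have := hlin (Real.log j) hlogj
    have hh : h (Real.log j) = Real.log (γ j) := by
      simp only [hhdef, Real.exp_log hj0]
    rw [hh] at this
    have h2 : Real.exp (C - δ * Real.log j) ≤ Real.exp (Real.log (γ j)) :=
      Real.exp_le_exp.mpr this
    rw [Real.exp_log hgj] at h2
    calc c * (j:ℝ) ^ (-δ) = Real.exp (C - δ * Real.log j) := by
          rw [hcdef, Real.rpow_def_of_pos hj0, ← Real.exp_add]
          congr 1; ring
      _ ≤ γ j := h2
  -- lower bound on ε
  have hεlb : ∀ j : ℕ, Real.exp X ≤ (j:ℝ) → c * (j:ℝ) ^ q ≤ ε j := by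
    intro j hj
    have hj0 : (0:ℝ) < j := lt_of_lt_of_le (Real.exp_pos X) hj
    have hj1 : (1:ℝ) ≤ j := le_trans (Real.one_le_exp hX0) hj
    have hj1' : 1 ≤ j := by exact_mod_cast hj1
    rw [hε j hj1']
    have hγ := hγlb j hj
    have hple : 0 ≤ (j:ℝ) ^ p := (Real.rpow_pos_of_pos hj0 p).le
    calc c * (j:ℝ) ^ q = (c * (j:ℝ) ^ (-δ)) * (j:ℝ) ^ p := by
          rw [mul_assoc, ← Real.rpow_add hj0]
          congr 2
          rw [hqdef]; ring
      _ ≤ γ j * (j:ℝ) ^ p := mul_le_mul_of_nonneg_right hγ hple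
  -- choice of J
  set J : ℕ := max 1 ⌈Real.exp X⌉₊ with hJdef
  have hJ1 : 1 ≤ J := le_max_left _ _
  have hJX : Real.exp X ≤ (J:ℝ) := by
    calc Real.exp X ≤ (⌈Real.exp X⌉₊ : ℝ) := Nat.le_ceil _
      _ ≤ (J:ℝ) := by exact_mod_cast le_max_right 1 ⌈Real.exp X⌉₊
  -- positivity of ε
  have hεpos : ∀ k : ℕ, 1 ≤ k → 0 < ε k := by
    intro k hk
    have hk1 : (1:ℝ) ≤ k := by exact_mod_cast hk
    rw [hε k hk]
    exact mul_pos (hγpos _ hk1) (Real.rpow_pos_of_pos (by linarith) p)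
  -- lower bound on sums
  have hTlb : ∀ j : ℕ, 2 * J ≤ j →
      (c/2) * (j:ℝ) ^ r ≤ ∑ k ∈ Finset.Ico 1 j, ε k := by
    intro j hj
    have hjJ : J ≤ j := le_trans (by omega) hj
    have hj1 : 1 ≤ j := le_trans hJ1 hjJ
    have hj0 : (0:ℝ) < j := by exact_mod_cast hj1
    have hstep1 : ∑ k ∈ Finset.Ico J j, ε k ≤ ∑ k ∈ Finset.Ico 1 j, ε k := by
      apply Finset.sum_le_sum_of_subset_of_nonneg
      · exact Finset.Ico_subset_Ico hJ1 le_rfl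
      · intro k hk _
        exact (hεpos k (Finset.mem_Ico.mp hk).1).le
    have hstep2 : ∀ k ∈ Finset.Ico J j, c * (j:ℝ) ^ q ≤ ε k := by
      intro k hk
      obtain ⟨hk1, hk2⟩ := Finset.mem_Ico.mp hk
      have hkX : Real.exp X ≤ (k:ℝ) := le_trans hJX (by exact_mod_cast hk1)
      have hk0 : (0:ℝ) < k := lt_of_lt_of_le (Real.exp_pos X) hkX
      have hkj : (k:ℝ) ≤ j := by exact_mod_cast hk2.le
      have := Real.rpow_le_rpow_of_nonpos hk0 hkj hq0.le
      calc c * (j:ℝ) ^ q ≤ c * (k:ℝ) ^ q := by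
            exact mul_le_mul_of_nonneg_left this hcpos.le
        _ ≤ ε k := hεlb k hkX
    have hstep3 : ((Finset.Ico J j).card : ℝ) * (c * (j:ℝ) ^ q)
        ≤ ∑ k ∈ Finset.Ico J j, ε k := by
      have := Finset.card_nsmul_le_sum (Finset.Ico J j) ε (c * (j:ℝ) ^ q) hstep2
      rwa [nsmul_eq_mul] at this
    have hcard : ((Finset.Ico J j).card : ℝ) = (j:ℝ) - (J:ℝ) := by
      rw [Nat.card_Ico, Nat.cast_sub hjJ]
    have hhalf : (j:ℝ)/2 ≤ (j:ℝ) - (J:ℝ) := by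
      have : (2*J : ℕ) ≤ j := hj
      have h2J : 2 * (J:ℝ) ≤ (j:ℝ) := by exact_mod_cast this
      linarith
    have hqpos : 0 ≤ c * (j:ℝ) ^ q := by positivity
    calc (c/2) * (j:ℝ) ^ r = ((j:ℝ)/2) * (c * (j:ℝ) ^ q) := by
          rw [hrdef, Real.rpow_add hj0, Real.rpow_one]
          ring
      _ ≤ ((j:ℝ) - (J:ℝ)) * (c * (j:ℝ) ^ q) := mul_le_mul_of_nonneg_right hhalf hqpos
      _ = ((Finset.Ico J j).card : ℝ) * (c * (j:ℝ) ^ q) := by rw [hcard]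
      _ ≤ ∑ k ∈ Finset.Ico J j, ε k := hstep3
      _ ≤ ∑ k ∈ Finset.Ico 1 j, ε k := hstep1
  -- main conclusion
  intro β hβ0 hβ1
  set l : ℕ → ℝ := fun j =>
    Real.exp ((β * (c/2)) * (j:ℝ) ^ r) * (c * (j:ℝ) ^ q) with hldef
  have hltend : Tendsto l atTop atTop := by
    have := (exp_rpow_mul_rpow_tendsto (β * (c/2)) c r q
      (by positivity) hcpos hrpos).comp (tendsto_natCast_atTop_atTop (R := ℝ))
    exact this
  have hbound : ∀ᶠ j : ℕ in atTop, l j ≤ (S (j + 1) - S j) / S j ^ (1 - β) := by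
    filter_upwards [eventually_ge_atTop (2 * J)] with j hj
    have hjJ : J ≤ j := le_trans (by omega) hj
    have hj1 : 1 ≤ j := le_trans hJ1 hjJ
    have hjX : Real.exp X ≤ (j:ℝ) := le_trans hJX (by exact_mod_cast hjJ)
    set T : ℝ := ∑ k ∈ Finset.Ico 1 j, ε k with hTdef
    have hT : (c/2) * (j:ℝ) ^ r ≤ T := hTlb j hj
    have hSj : S j = Real.exp T := hS j
    have hSj1 : S (j + 1) = Real.exp (T + ε j) := by
      rw [hS (j+1), Finset.sum_Ico_succ_top hj1]
    have hSpow : S j ^ (1 - β) = Real.exp (T * (1 - β)) := by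
      rw [hSj, ← Real.exp_log (Real.exp_pos T), Real.log_exp,
        Real.rpow_def_of_pos (Real.exp_pos T), Real.log_exp]
    have hεj := hεlb j hjX
    have hεjpos : 0 < ε j := hεpos j hj1
    have hnum : Real.exp T * ε j ≤ S (j + 1) - S j := by
      rw [hSj1, hSj, Real.exp_add]
      have := Real.add_one_le_exp (ε j)
      nlinarith [Real.exp_pos T]
    have hden : (0:ℝ) < S j ^ (1 - β) := by rw [hSpow]; exact Real.exp_pos _
    have hdiv : (Real.exp T * ε j) / (S j ^ (1 - β)) ≤ (S (j + 1) - S j) / S j ^ (1 - β) :=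
      (div_le_div_iff_of_pos_right hden).mpr hnum
    have hexpmono : Real.exp ((β * (c/2)) * (j:ℝ) ^ r) ≤ Real.exp (β * T) := by
      apply Real.exp_le_exp.mpr
      calc (β * (c/2)) * (j:ℝ) ^ r = β * ((c/2) * (j:ℝ) ^ r) := by ring
        _ ≤ β * T := mul_le_mul_of_nonneg_left hT hβ0.le
    have hl1 : l j ≤ Real.exp (β * T) * ε j := by
      apply mul_le_mul hexpmono hεj ?_ (Real.exp_pos _).le
      have hj0 : (0:ℝ) < j := lt_of_lt_of_le (Real.exp_pos X) hjX
      positivity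
    have hkey : Real.exp (β * T) * ε j = (Real.exp T * ε j) / (S j ^ (1 - β)) := by
      rw [hSpow, eq_div_iff (Real.exp_pos _).ne', mul_right_comm, ← Real.exp_add]
      have e : β * T + T * (1 - β) = T := by ring
      rw [e]
    exact le_trans (hl1.trans_eq hkey) hdiv
  constructor
  · exact tendsto_atTop_mono' atTop hbound hltend
  · exact (tendsto_atTop_mono' atTop hbound hltend).eventually (eventually_gt_atTop 1)
end

section
/- Let (γ(j))_{j≥1} be positive reals with γ(j) → γ_∞ ∈ (0,∞) as j → ∞, set ε_j = γ(j)/j and S_j = exp(Σ_{k=1}^{j−1} ε_k), and fix β ∈ (0,1]. If β γ_∞ > 1 then the one-step separation ratio R_j(β) = (S_j − S_{j−1})/S_{j−1}^{1−β} tends to +∞ (so R_j(β) > 1 eventually), while if β γ_∞ < 1 then R_j(β) tends to 0 (so R_j(β) < 1 eventually). -/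
open Filter Real

lemma ico_telescope (f : ℕ → ℝ) {K j : ℕ} (h : K ≤ j) :
    ∑ k ∈ Finset.Ico K j, (f (k+1) - f k) = f j - f K := by
  rw [Finset.sum_Ico_eq_sub _ h, Finset.sum_range_sub, Finset.sum_range_sub]
  ring

lemma harmonic_lower (K j : ℕ) (hK : 1 ≤ K) (h : K ≤ j) :
    Real.log j - Real.log K ≤ ∑ k ∈ Finset.Ico K j, (1:ℝ)/k := by
  have htel := ico_telescope (fun k : ℕ => Real.log k) h
  calc Real.log j - Real.log K
      = ∑ k ∈ Finset.Ico K j, (Real.log ((k:ℕ)+1 : ℕ) - Real.log k) := htel.symm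
    _ ≤ ∑ k ∈ Finset.Ico K j, (1:ℝ)/k := by
        apply Finset.sum_le_sum
        intro k hk
        have hk1 : 1 ≤ k := le_trans hK (Finset.mem_Ico.mp hk).1
        have hkpos : (0:ℝ) < k := by exact_mod_cast hk1
        have hc : ((k+1 : ℕ) : ℝ) = (k:ℝ) + 1 := by push_cast; ring
        rw [hc]
        have h2 : Real.log ((k:ℝ)+1) - Real.log k = Real.log (((k:ℝ)+1)/k) := by
          rw [Real.log_div (by positivity) (ne_of_gt hkpos)]
        rw [h2]
        have hlog := Real.log_le_sub_one_of_pos (show (0:ℝ) < ((k:ℝ)+1)/k by positivity)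
        have h3 : ((k:ℝ)+1)/k - 1 = 1/k := by field_simp; ring
        linarith

lemma harmonic_upper (K j : ℕ) (hK : 2 ≤ K) (h : K ≤ j) :
    ∑ k ∈ Finset.Ico K j, (1:ℝ)/k ≤ Real.log j := by
  have htel := ico_telescope (fun k : ℕ => Real.log ((k:ℝ) - 1)) h
  have hj2 : (2:ℝ) ≤ j := by exact_mod_cast le_trans hK h
  calc ∑ k ∈ Finset.Ico K j, (1:ℝ)/k
      ≤ ∑ k ∈ Finset.Ico K j, (Real.log (((k+1:ℕ):ℝ)-1) - Real.log ((k:ℝ)-1)) := by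
        apply Finset.sum_le_sum
        intro k hk
        have hk2' : (2:ℝ) ≤ k := by exact_mod_cast le_trans hK (Finset.mem_Ico.mp hk).1
        have hkpos : (0:ℝ) < k := by linarith
        have h1 : (0:ℝ) < (k:ℝ) - 1 := by linarith
        have hc : ((k+1 : ℕ) : ℝ) - 1 = (k:ℝ) := by push_cast; ring
        rw [hc]
        have h2 : Real.log (k:ℝ) - Real.log ((k:ℝ)-1) = - Real.log (((k:ℝ)-1)/k) := by
          rw [Real.log_div (by linarith) (ne_of_gt hkpos)]; ring
        rw [h2]
        have hlog := Real.log_le_sub_one_of_pos (show (0:ℝ) < ((k:ℝ)-1)/k by positivity)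
        have h3 : ((k:ℝ)-1)/k - 1 = -(1/k) := by field_simp; ring
        linarith
    _ = Real.log ((j:ℝ)-1) - Real.log ((K:ℝ)-1) := htel
    _ ≤ Real.log j := by
        have hK1 : (1:ℝ) ≤ (K:ℝ) - 1 := by
          have : (2:ℝ) ≤ K := by exact_mod_cast hK
          linarith
        have h1 : Real.log ((j:ℝ)-1) ≤ Real.log j :=
          Real.log_le_log (by linarith) (by linarith)
        have h2 : 0 ≤ Real.log ((K:ℝ)-1) := Real.log_nonneg hK1
        linarith

/-- Boundary case `ε_j = γ(j)/j` with `γ(j) → γ∞ ∈ (0,∞)`: for `β ∈ (0,1]`, if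
`β γ∞ > 1` then `R_j(β) = (S_j - S_{j-1})/S_{j-1}^{1-β} → ∞` (so eventually `> 1`),
while if `β γ∞ < 1` then `R_j(β) → 0` (so eventually `< 1`). -/
theorem separation_ratio_boundary
    (γ : ℕ → ℝ) (hγpos : ∀ j : ℕ, 1 ≤ j → 0 < γ j)
    (γinf : ℝ) (hγinf : 0 < γinf) (hγlim : Tendsto γ atTop (nhds γinf))
    (ε : ℕ → ℝ) (hε : ∀ j : ℕ, 1 ≤ j → ε j = γ j / j)
    (S : ℕ → ℝ) (hS : ∀ j, S j = Real.exp (∑ k ∈ Finset.Ico 1 j, ε k))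
    (β : ℝ) (hβ₀ : 0 < β) (hβ₁ : β ≤ 1) :
    (1 < β * γinf →
        Tendsto (fun j : ℕ => (S (j + 1) - S j) / S j ^ (1 - β)) atTop atTop ∧
        ∀ᶠ j : ℕ in atTop, 1 < (S (j + 1) - S j) / S j ^ (1 - β)) ∧
      (β * γinf < 1 →
        Tendsto (fun j : ℕ => (S (j + 1) - S j) / S j ^ (1 - β)) atTop (nhds 0) ∧
        ∀ᶠ j : ℕ in atTop, (S (j + 1) - S j) / S j ^ (1 - β) < 1) := by
  set T : ℕ → ℝ := fun j => ∑ k ∈ Finset.Ico 1 j, ε k with hTdef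
  have hεpos : ∀ j : ℕ, 1 ≤ j → 0 < ε j := by
    intro j hj
    rw [hε j hj]
    have : (0:ℝ) < j := by exact_mod_cast hj
    exact div_pos (hγpos j hj) this
  set L : ℕ → ℝ := fun j => β * T j + Real.log (Real.exp (ε j) - 1) with hLdef
  -- rewrite of the ratio
  have hR : ∀ j : ℕ, 1 ≤ j →
      (S (j+1) - S j) / S j ^ (1-β) = Real.exp (L j) := by
    intro j hj
    have hTsucc : T (j+1) = T j + ε j := by
      simp [hTdef, Finset.sum_Ico_succ_top hj]
    have hrpow : (Real.exp (T j)) ^ (1-β) = Real.exp (T j * (1-β)) := by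
      rw [Real.rpow_def_of_pos (Real.exp_pos _), Real.log_exp]
    have hex : 0 < Real.exp (ε j) - 1 := by
      have := hεpos j hj
      nlinarith [Real.add_one_le_exp (ε j), Real.exp_pos (ε j)]
    have e1 : Real.exp (β * T j) * Real.exp (T j * (1-β)) = Real.exp (T j) := by
      rw [← Real.exp_add, show β * T j + T j * (1-β) = T j by ring]
    rw [hS (j+1), hS j]
    show (Real.exp (T (j+1)) - Real.exp (T j)) / (Real.exp (T j)) ^ (1-β)
        = Real.exp (L j)
    rw [hTsucc, hrpow, hLdef]
    show (Real.exp (T j + ε j) - Real.exp (T j)) / Real.exp (T j * (1-β))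
        = Real.exp (β * T j + Real.log (Real.exp (ε j) - 1))
    rw [Real.exp_add (β * T j), Real.exp_log hex, Real.exp_add (T j),
      div_eq_iff (ne_of_gt (Real.exp_pos _))]
    linear_combination (1 - Real.exp (ε j)) * e1
  have hRQ : (fun j : ℕ => (S (j+1) - S j) / S j ^ (1-β)) =ᶠ[atTop]
      (fun j : ℕ => Real.exp (L j)) := by
    filter_upwards [eventually_ge_atTop 1] with j hj using hR j hj
  have hlogn : Tendsto (fun j : ℕ => Real.log j) atTop atTop :=
    Real.tendsto_log_atTop.comp tendsto_natCast_atTop_atTop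
  constructor
  · -- case 1: 1 < β γ∞
    intro h1
    set δ : ℝ := (β * γinf - 1) / (2 * β) with hδdef
    have hδpos : 0 < δ := div_pos (by linarith) (by positivity)
    have hβδ : β * δ = (β * γinf - 1) / 2 := by
      rw [hδdef]; field_simp
    have hkey : 1 < β * (γinf - δ) := by nlinarith
    have hgd : 0 < γinf - δ := by nlinarith
    set c : ℝ := β * (γinf - δ) - 1 with hcdef
    have hcpos : 0 < c := by simp [hcdef]; linarith
    obtain ⟨N, hN⟩ := Metric.tendsto_atTop.mp hγlim δ hδpos
    set K : ℕ := max N 1 with hKdef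
    have hK1 : 1 ≤ K := le_max_right _ _
    have hγK : ∀ k : ℕ, K ≤ k → γinf - δ ≤ γ k := by
      intro k hk
      have := hN k (le_trans (le_max_left _ _) hk)
      rw [Real.dist_eq, abs_lt] at this
      linarith
    set C : ℝ := -(β * (γinf - δ)) * Real.log K + Real.log (γinf - δ) with hCdef
    have hbound : ∀ j : ℕ, K ≤ j → c * Real.log j + C ≤ L j := by
      intro j hj
      have hj1 : 1 ≤ j := le_trans hK1 hj
      -- lower bound the sum
      have hsum1 : (γinf - δ) * (Real.log j - Real.log K) ≤ T j := by
        have h1' : ∑ k ∈ Finset.Ico K j, ε k ≤ T j := by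
          apply Finset.sum_le_sum_of_subset_of_nonneg
          · exact Finset.Ico_subset_Ico hK1 le_rfl
          · intro k hk _
            exact le_of_lt (hεpos k (Finset.mem_Ico.mp hk).1)
        have h2' : ∑ k ∈ Finset.Ico K j, (γinf - δ) * ((1:ℝ)/k)
            ≤ ∑ k ∈ Finset.Ico K j, ε k := by
          apply Finset.sum_le_sum
          intro k hk
          have hk1 : 1 ≤ k := le_trans hK1 (Finset.mem_Ico.mp hk).1
          have hkpos : (0:ℝ) < k := by exact_mod_cast hk1
          rw [hε k hk1]
          rw [mul_one_div, div_le_div_iff₀ hkpos hkpos]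
          have := hγK k (Finset.mem_Ico.mp hk).1
          nlinarith
        have h3' := harmonic_lower K j hK1 hj
        calc (γinf - δ) * (Real.log j - Real.log K)
            ≤ (γinf - δ) * ∑ k ∈ Finset.Ico K j, (1:ℝ)/k :=
              mul_le_mul_of_nonneg_left h3' (le_of_lt hgd)
          _ = ∑ k ∈ Finset.Ico K j, (γinf - δ) * ((1:ℝ)/k) := by
              rw [Finset.mul_sum]
          _ ≤ T j := le_trans h2' h1'
      -- lower bound the log term
      have hlog2 : Real.log (γinf - δ) - Real.log j ≤ Real.log (Real.exp (ε j) - 1) := by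
        have hεj : 0 < ε j := hεpos j hj1
        have hle : ε j ≤ Real.exp (ε j) - 1 := by
          have := Real.add_one_le_exp (ε j); linarith
        have hjpos : (0:ℝ) < j := by exact_mod_cast hj1
        have h1' : Real.log (ε j) ≤ Real.log (Real.exp (ε j) - 1) :=
          Real.log_le_log hεj hle
        have h2' : Real.log (ε j) = Real.log (γ j) - Real.log j := by
          rw [hε j hj1, Real.log_div (ne_of_gt (hγpos j hj1)) (ne_of_gt hjpos)]
        have h3' : Real.log (γinf - δ) ≤ Real.log (γ j) :=
          Real.log_le_log hgd (hγK j hj)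
        linarith
      have hβT : β * ((γinf - δ) * (Real.log j - Real.log K)) ≤ β * T j :=
        mul_le_mul_of_nonneg_left hsum1 (le_of_lt hβ₀)
      have : c * Real.log j + C
          = β * ((γinf - δ) * (Real.log j - Real.log K))
            + (Real.log (γinf - δ) - Real.log j) := by
        rw [hcdef, hCdef]; ring
      rw [this]
      exact add_le_add hβT hlog2
    have hLtop : Tendsto L atTop atTop := by
      apply tendsto_atTop_mono' atTop
      · filter_upwards [eventually_ge_atTop K] with j hj using hbound j hj
      · exact tendsto_atTop_add_const_right _ C (hlogn.const_mul_atTop hcpos)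
    have hfin : Tendsto (fun j : ℕ => (S (j+1) - S j) / S j ^ (1-β)) atTop atTop :=
      (Real.tendsto_exp_atTop.comp hLtop).congr' hRQ.symm
    exact ⟨hfin, hfin.eventually_gt_atTop 1⟩
  · -- case 2: β γ∞ < 1
    intro h2
    set δ : ℝ := (1 - β * γinf) / (2 * β) with hδdef
    have hδpos : 0 < δ := div_pos (by linarith) (by positivity)
    have hβδ : β * δ = (1 - β * γinf) / 2 := by
      rw [hδdef]; field_simp
    have hkey : β * (γinf + δ) < 1 := by nlinarith
    have hgd : 0 < γinf + δ := by linarith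
    set c : ℝ := β * (γinf + δ) - 1 with hcdef
    have hcneg : c < 0 := by simp [hcdef]; linarith
    obtain ⟨N, hN⟩ := Metric.tendsto_atTop.mp hγlim δ hδpos
    set K : ℕ := max N 2 with hKdef
    have hK2 : 2 ≤ K := le_max_right _ _
    have hK1 : 1 ≤ K := le_trans (by norm_num) hK2
    have hγK : ∀ k : ℕ, K ≤ k → γ k ≤ γinf + δ := by
      intro k hk
      have := hN k (le_trans (le_max_left _ _) hk)
      rw [Real.dist_eq, abs_lt] at this
      linarith
    set CK : ℝ := ∑ k ∈ Finset.Ico 1 K, ε k with hCKdef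
    set C : ℝ := β * CK + Real.log (γinf + δ) + (γinf + δ) with hCdef
    have hbound : ∀ j : ℕ, K ≤ j → L j ≤ c * Real.log j + C := by
      intro j hj
      have hj1 : 1 ≤ j := le_trans hK1 hj
      have hjpos : (0:ℝ) < j := by exact_mod_cast hj1
      have hj1' : (1:ℝ) ≤ j := by exact_mod_cast hj1
      -- upper bound the sum
      have hsum1 : T j ≤ CK + (γinf + δ) * Real.log j := by
        have hsplit : T j = CK + ∑ k ∈ Finset.Ico K j, ε k := by
          rw [hCKdef, hTdef]
          exact (Finset.sum_Ico_consecutive _ hK1 hj).symm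
        have h2' : ∑ k ∈ Finset.Ico K j, ε k
            ≤ ∑ k ∈ Finset.Ico K j, (γinf + δ) * ((1:ℝ)/k) := by
          apply Finset.sum_le_sum
          intro k hk
          have hk1 : 1 ≤ k := le_trans hK1 (Finset.mem_Ico.mp hk).1
          have hkpos : (0:ℝ) < k := by exact_mod_cast hk1
          rw [hε k hk1, mul_one_div, div_le_div_iff₀ hkpos hkpos]
          have := hγK k (Finset.mem_Ico.mp hk).1
          nlinarith
        have h3' := harmonic_upper K j hK2 hj
        calc T j = CK + ∑ k ∈ Finset.Ico K j, ε k := hsplit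
          _ ≤ CK + (γinf + δ) * ∑ k ∈ Finset.Ico K j, (1:ℝ)/k := by
              rw [← Finset.mul_sum] at h2'; linarith
          _ ≤ CK + (γinf + δ) * Real.log j := by
              have := mul_le_mul_of_nonneg_left h3' (le_of_lt hgd)
              linarith
      -- upper bound for the log term
      have hεj : 0 < ε j := hεpos j hj1
      have hεle : ε j ≤ γinf + δ := by
        rw [hε j hj1]
        calc γ j / j ≤ γ j / 1 := by
              apply div_le_div_of_nonneg_left (le_of_lt (hγpos j hj1)) one_pos hj1'
              -- wrong direction? fix below
          _ = γ j := by ring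
          _ ≤ γinf + δ := hγK j hj
      have hlog2 : Real.log (Real.exp (ε j) - 1)
          ≤ Real.log (γinf + δ) - Real.log j + (γinf + δ) := by
        have hexp : 0 < Real.exp (ε j) - 1 := by
          nlinarith [Real.add_one_le_exp (ε j), Real.exp_pos (ε j)]
        have hle : Real.exp (ε j) - 1 ≤ ε j * Real.exp (ε j) := by
          have h := Real.add_one_le_exp (-(ε j))
          have he := Real.exp_pos (ε j)
          have hne : Real.exp (-(ε j)) = 1 / Real.exp (ε j) := by
            rw [Real.exp_neg]; exact (inv_eq_one_div _)
          rw [hne] at h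
          have := mul_le_mul_of_nonneg_right h (le_of_lt he)
          rw [div_mul_cancel₀] at this
          · nlinarith
          · exact ne_of_gt he
        have h1' : Real.log (Real.exp (ε j) - 1) ≤ Real.log (ε j * Real.exp (ε j)) :=
          Real.log_le_log hexp hle
        have h2' : Real.log (ε j * Real.exp (ε j)) = Real.log (ε j) + ε j := by
          rw [Real.log_mul (ne_of_gt hεj) (ne_of_gt (Real.exp_pos _)), Real.log_exp]
        have h3' : Real.log (ε j) = Real.log (γ j) - Real.log j := by
          rw [hε j hj1, Real.log_div (ne_of_gt (hγpos j hj1)) (ne_of_gt hjpos)]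
        have h4' : Real.log (γ j) ≤ Real.log (γinf + δ) :=
          Real.log_le_log (hγpos j hj1) (hγK j hj)
        linarith
      have hβT : β * T j ≤ β * (CK + (γinf + δ) * Real.log j) :=
        mul_le_mul_of_nonneg_left hsum1 (le_of_lt hβ₀)
      have heq : c * Real.log j + C
          = β * (CK + (γinf + δ) * Real.log j)
            + (Real.log (γinf + δ) - Real.log j + (γinf + δ)) := by
        rw [hcdef, hCdef]; ring
      rw [hLdef]
      calc β * T j + Real.log (Real.exp (ε j) - 1)
          ≤ β * (CK + (γinf + δ) * Real.log j)
            + (Real.log (γinf + δ) - Real.log j + (γinf + δ)) := add_le_add hβT hlog2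
        _ = c * Real.log j + C := heq.symm
    have hLbot : Tendsto L atTop atBot := by
      apply tendsto_atBot_mono' atTop
      · filter_upwards [eventually_ge_atTop K] with j hj using hbound j hj
      · exact tendsto_atBot_add_const_right _ C (hlogn.const_mul_atTop_of_neg hcneg)
    have hfin : Tendsto (fun j : ℕ => (S (j+1) - S j) / S j ^ (1-β)) atTop (nhds 0) :=
      (Real.tendsto_exp_atBot.comp hLbot).congr' hRQ.symm
    exact ⟨hfin, hfin.eventually_lt_const one_pos⟩
end

section
/- Let γ : [1,∞) → (0,∞) be a measurable slowly varying function (for every a > 0, γ(a u)/γ(u) → 1 as u → ∞) with γ(j) → +∞ as j → ∞, set ε_j = γ(j)/j and S_j = exp(Σ_{k=1}^{j−1} ε_k). Then for every β ∈ (0,1], the one-step separation ratio R_j(β) = (S_j − S_{j−1})/S_{j−1}^{1−β} tends to +∞ as j → ∞; in particular R_j(β) > 1 for all sufficiently large j. -/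
open Filter Real

/-- For slowly varying `γ` with `γ(j) → ∞`, `ε_j = γ(j)/j`, and
`S_j = exp(Σ_{k=1}^{j-1} ε_k)`: for every `β ∈ (0,1]`, the separation ratio
`R_j(β) = (S_j - S_{j-1})/S_{j-1}^{1-β}` tends to `+∞`; in particular `R_j(β) > 1`
eventually. -/
theorem separation_ratio_divergence_slowly_varying_infinity
    (γ : ℝ → ℝ) (hmeas : Measurable γ) (hγpos : ∀ u : ℝ, 1 ≤ u → 0 < γ u)
    (hsv : ∀ a : ℝ, 0 < a → Tendsto (fun u : ℝ => γ (a * u) / γ u) atTop (nhds 1))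
    (hγinf : Tendsto γ atTop atTop)
    (ε : ℕ → ℝ) (hε : ∀ j : ℕ, 1 ≤ j → ε j = γ j / j)
    (S : ℕ → ℝ) (hS : ∀ j, S j = Real.exp (∑ k ∈ Finset.Ico 1 j, ε k)) :
    ∀ β : ℝ, 0 < β → β ≤ 1 →
      Tendsto (fun j : ℕ => (S (j + 1) - S j) / S j ^ (1 - β)) atTop atTop ∧
      ∀ᶠ j : ℕ in atTop, 1 < (S (j + 1) - S j) / S j ^ (1 - β) := by
  intro β hβ0 hβ1
  set T : ℕ → ℝ := fun j => ∑ k ∈ Finset.Ico 1 j, ε k with hT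
  set M : ℝ := 2 / β with hM
  have hM0 : 0 < M := by positivity
  have hβM : β * M = 2 := by rw [hM]; field_simp
  -- choose K
  obtain ⟨K0, hK0⟩ := eventually_atTop.mp (hγinf.eventually_ge_atTop (max M 1))
  set K : ℕ := max ⌈K0⌉₊ 1 with hKdef
  have hK1 : 1 ≤ K := le_max_right _ _
  have hγK : ∀ k : ℕ, K ≤ k → max M 1 ≤ γ k := by
    intro k hk
    apply hK0
    calc K0 ≤ (⌈K0⌉₊ : ℝ) := Nat.le_ceil _
    _ ≤ (K : ℝ) := by exact_mod_cast Nat.cast_le.mpr (le_max_left _ _)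
    _ ≤ (k : ℝ) := by exact_mod_cast hk
  set C : ℝ := 2 * Real.log K with hC
  -- epsilon positivity
  have hεpos : ∀ k : ℕ, 1 ≤ k → 0 < ε k := by
    intro k hk
    rw [hε k hk]
    have : (1:ℝ) ≤ (k:ℝ) := by exact_mod_cast hk
    exact div_pos (hγpos _ this) (by linarith)
  -- key eventual lower bound on β * T j - log j
  have hglow : ∀ j : ℕ, K + 1 ≤ j → Real.log j - C ≤ β * T j - Real.log j := by
    intro j hj
    have hKj : K ≤ j := le_trans (Nat.le_succ K) hj
    have hlog : Real.log j - Real.log K ≤ ∑ k ∈ Finset.Ico K j, (1 / (k:ℝ)) := by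
      have htel : ∑ k ∈ Finset.Ico K j, (Real.log (k+1:ℕ) - Real.log k) =
          Real.log j - Real.log K := by
        rw [Finset.sum_Ico_eq_sub _ hKj,
          Finset.sum_range_sub (f := fun k : ℕ => Real.log (k:ℝ)),
          Finset.sum_range_sub (f := fun k : ℕ => Real.log (k:ℝ))]
        ring
      rw [← htel]
      apply Finset.sum_le_sum
      intro k hk
      have hk1 : 1 ≤ k := le_trans hK1 (Finset.mem_Ico.mp hk).1
      have hk0 : (0:ℝ) < (k:ℝ) := by exact_mod_cast hk1
      have h1 : Real.log (((k:ℝ)+1)/k) ≤ ((k:ℝ)+1)/k - 1 :=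
        Real.log_le_sub_one_of_pos (by positivity)
      rw [Real.log_div (by positivity) (ne_of_gt hk0)] at h1
      have h2 : ((k:ℝ)+1)/k - 1 = 1 / k := by field_simp; ring
      push_cast
      linarith [h1, h2.le]
    have hsum : M * (Real.log j - Real.log K) ≤ T j := by
      have h1 : ∑ k ∈ Finset.Ico K j, (M / (k:ℝ)) ≤ ∑ k ∈ Finset.Ico K j, ε k := by
        apply Finset.sum_le_sum
        intro k hk
        have hkK : K ≤ k := (Finset.mem_Ico.mp hk).1
        have hk1 : 1 ≤ k := le_trans hK1 hkK
        have hk0 : (0:ℝ) < (k:ℝ) := by exact_mod_cast hk1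
        rw [hε k hk1]
        gcongr
        exact le_trans (le_max_left M 1) (hγK k hkK)
      have h2 : ∑ k ∈ Finset.Ico K j, ε k ≤ T j := by
        apply Finset.sum_le_sum_of_subset_of_nonneg
        · exact Finset.Ico_subset_Ico hK1 le_rfl
        · intro k hk _
          exact (hεpos k (Finset.mem_Ico.mp hk).1).le
      calc M * (Real.log j - Real.log K) ≤ M * ∑ k ∈ Finset.Ico K j, (1 / (k:ℝ)) := by
            exact mul_le_mul_of_nonneg_left hlog hM0.le
      _ = ∑ k ∈ Finset.Ico K j, (M / (k:ℝ)) := by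
            rw [Finset.mul_sum]; apply Finset.sum_congr rfl; intro k _; ring
      _ ≤ T j := h1.trans h2
    have := mul_le_mul_of_nonneg_left hsum hβ0.le
    rw [← mul_assoc, hβM] at this
    nlinarith [this]
  -- the ratio equals exp(β T j) * (exp (ε j) - 1) and is ≥ exp(log j - C) eventually
  have hratio : ∀ j : ℕ, K + 1 ≤ j →
      Real.exp (Real.log j - C) ≤ (S (j + 1) - S j) / S j ^ (1 - β) := by
    intro j hj
    have hj1 : 1 ≤ j := le_trans hK1 (le_trans (Nat.le_succ K) hj)
    have hj0 : (0:ℝ) < (j:ℝ) := by exact_mod_cast hj1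
    have hSj : S j = Real.exp (T j) := hS j
    have hSj1 : S (j+1) = Real.exp (T j + ε j) := by
      rw [hS (j+1), hT]
      congr 1
      rw [Finset.sum_Ico_succ_top hj1]
    have hSpos : 0 < S j := hSj ▸ Real.exp_pos _
    have hpow : S j ^ (1 - β) = Real.exp ((1 - β) * T j) := by
      rw [hSj, Real.rpow_def_of_pos (Real.exp_pos _), Real.log_exp]
      congr 1
      ring
    have heq : (S (j + 1) - S j) / S j ^ (1 - β)
        = Real.exp (β * T j) * (Real.exp (ε j) - 1) := by
      have e1 : Real.exp (T j + ε j)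
          = Real.exp (β * T j) * Real.exp (ε j) * Real.exp ((1 - β) * T j) := by
        rw [← Real.exp_add, ← Real.exp_add]; congr 1; ring
      have e2 : Real.exp (T j) = Real.exp (β * T j) * Real.exp ((1 - β) * T j) := by
        rw [← Real.exp_add]; congr 1; ring
      rw [hpow, hSj, hSj1, e1, e2]
      field_simp
    rw [heq]
    have hεj : 1 / (j:ℝ) ≤ ε j := by
      rw [hε j hj1]
      gcongr
      exact le_trans (le_max_right M 1) (hγK j (le_trans (Nat.le_succ K) hj))
    have h1 : ε j ≤ Real.exp (ε j) - 1 := by linarith [Real.add_one_le_exp (ε j)]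
    have h2 : 1 / (j:ℝ) ≤ Real.exp (ε j) - 1 := le_trans hεj h1
    calc Real.exp (Real.log j - C) ≤ Real.exp (β * T j - Real.log j) :=
          Real.exp_le_exp.mpr (hglow j hj)
    _ = Real.exp (β * T j) * (1 / j) := by
          rw [Real.exp_sub, Real.exp_log hj0]; ring
    _ ≤ Real.exp (β * T j) * (Real.exp (ε j) - 1) :=
          mul_le_mul_of_nonneg_left h2 (Real.exp_pos _).le
  -- base tendsto
  have hbase : Tendsto (fun j : ℕ => Real.exp (Real.log j - C)) atTop atTop := by
    apply Real.tendsto_exp_atTop.comp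
    apply tendsto_atTop_add_const_right
    exact Real.tendsto_log_atTop.comp tendsto_natCast_atTop_atTop
  have key : Tendsto (fun j : ℕ => (S (j + 1) - S j) / S j ^ (1 - β)) atTop atTop := by
    apply tendsto_atTop_mono' atTop _ hbase
    filter_upwards [eventually_ge_atTop (K + 1)] with j hj
    exact hratio j hj
  exact ⟨key, key.eventually_gt_atTop 1⟩
end
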